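/- arXiv:1108.1210 — 9 statements merged into one kernel-verified Lean document; each statement's English description precedes it below -/
import Mathlib

section
/- Let 0 ≤ q ≤ p ≤ 2 and C > 0. If the Markov generator L satisfies the p-logSob inequality with constant C, then L also satisfies the q-logSob inequality with the same constant C. -/
open Real Finset

noncomputable section

variable {Ω : Type*}

/-- Expectation `E f = ∑ ω, μ ω * f ω`. -/
def pexp [Fintype Ω] (μ : Ω → ℝ) (f : Ω → ℝ) : ℝ := ∑ ω, μ ω * f ω

/-- Dirichlet form `𝓔(f,g) = E[f · L g]`. -/
def dform [Fintype Ω] (μ : Ω → ℝ) (L : (Ω → ℝ) →ₗ[ℝ] (Ω → ℝ)) (f g : Ω → ℝ) : ℝ :=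
  pexp μ fun ω => f ω * L g ω

/-- Entropy `Ent(f) = E[f log f] − (E f) log (E f)`. -/
def entE [Fintype Ω] (μ : Ω → ℝ) (f : Ω → ℝ) : ℝ :=
  pexp μ (fun ω => f ω * Real.log (f ω)) - pexp μ f * Real.log (pexp μ f)

/-- Variance `Var(f) = E[f²] − (E f)²`. -/
def varE [Fintype Ω] (μ : Ω → ℝ) (f : Ω → ℝ) : ℝ :=
  pexp μ (fun ω => f ω ^ 2) - (pexp μ f) ^ 2

/-- The structural conditions on the Markov generator `L`: `L 1 = 0`, self-adjointness,
positive semidefiniteness, and nonnegativity of `L f` at a global maximum point of `f`. -/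
def IsGen [Fintype Ω] (μ : Ω → ℝ) (L : (Ω → ℝ) →ₗ[ℝ] (Ω → ℝ)) : Prop :=
  L (fun _ => 1) = 0 ∧
  (∀ f g, pexp μ (fun ω => f ω * L g ω) = pexp μ (fun ω => g ω * L f ω)) ∧
  (∀ f, 0 ≤ pexp μ (fun ω => f ω * L f ω)) ∧
  (∀ (f : Ω → ℝ) (ω : Ω), (∀ x, f x ≤ f ω) → 0 ≤ L f ω)

/-- The `p`-logSob inequality with constant `C` (with the conventions for `p = 0` and `p = 1`). -/
def LogSob [Fintype Ω] (μ : Ω → ℝ) (L : (Ω → ℝ) →ₗ[ℝ] (Ω → ℝ)) (p C : ℝ) : Prop :=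
  if p = 0 then
    ∀ f : Ω → ℝ, (∀ ω, 0 < f ω) →
      varE μ (fun ω => Real.log (f ω)) ≤ -(C / 2) * dform μ L f (fun ω => (f ω)⁻¹)
  else if p = 1 then
    ∀ f : Ω → ℝ, (∀ ω, 0 < f ω) →
      entE μ f ≤ C / 4 * dform μ L f (fun ω => Real.log (f ω))
  else
    ∀ f : Ω → ℝ, (∀ ω, 0 < f ω) →
      entE μ (fun ω => f ω ^ p) ≤
        C * p ^ 2 / (4 * (p - 1)) * dform μ L (fun ω => f ω ^ (p - 1)) f

/-- Markov semigroup `T t = e^{-tL}`. -/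
def heat [Fintype Ω] (L : (Ω → ℝ) →ₗ[ℝ] (Ω → ℝ)) (t : ℝ) (f : Ω → ℝ) : Ω → ℝ :=
  NormedSpace.exp ((-t) • (LinearMap.toContinuousLinearMap L)) f

/-- `‖f‖_p` for positive `f` and arbitrary real `p`, with `‖f‖_0 = exp (E log f)`. -/
def pnorm [Fintype Ω] (μ : Ω → ℝ) (p : ℝ) (f : Ω → ℝ) : ℝ :=
  if p = 0 then Real.exp (pexp μ fun ω => Real.log (f ω))
  else (pexp μ fun ω => f ω ^ p) ^ (1 / p)

/-- `‖f‖_p = (E |f|^p)^{1/p}` for real-valued `f`. -/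
def pnormAbs [Fintype Ω] (μ : Ω → ℝ) (p : ℝ) (f : Ω → ℝ) : ℝ :=
  (pexp μ fun ω => |f ω| ^ p) ^ (1 / p)

/-- Hölder conjugate `p' = p/(p-1)`, with the convention `0' = 0`. -/
def hconj (p : ℝ) : ℝ := if p = 0 then 0 else p / (p - 1)

/-- The simple generator `L = Id − E`. -/
def simpleL [Fintype Ω] (μ : Ω → ℝ) : (Ω → ℝ) →ₗ[ℝ] (Ω → ℝ) where
  toFun f := fun ω => f ω - pexp μ f
  map_add' f g := by
    funext ω
    simp only [Pi.add_apply, pexp, mul_add, Finset.sum_add_distrib]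
    ring
  map_smul' c f := by
    funext ω
    simp only [Pi.smul_apply, smul_eq_mul, pexp, RingHom.id_apply]
    rw [mul_sub, Finset.mul_sum]
    congr 1
    exact Finset.sum_congr rfl fun x _ => by ring



namespace LSaux
open intervalIntegral


/-- `α(r) = (a^r - b^r)/r`, with `α(0) = log a - log b`. -/
def alph (a b r : ℝ) : ℝ := if r = 0 then Real.log a - Real.log b else (a ^ r - b ^ r) / r

lemma alph_swap (a b r : ℝ) : alph a b r = - alph b a r := by
  unfold alph; split <;> ring

lemma alph_self (a r : ℝ) : alph a a r = 0 := by
  unfold alph; split <;> simp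

lemma alph_integral {a b : ℝ} (ha : 0 < a) (hb : 0 < b) (r : ℝ) :
    alph a b r = ∫ x in b..a, x ^ (r - 1) := by
  have h0 : (0:ℝ) ∉ Set.uIcc b a := Set.notMem_uIcc_of_lt hb ha
  unfold alph
  split_ifs with hr
  · subst hr
    rw [show ((0:ℝ) - 1) = ((-1 : ℤ) : ℝ) by norm_num]
    simp only [Real.rpow_intCast, zpow_neg_one]
    rw [integral_inv h0, Real.log_div (ne_of_gt ha) (ne_of_gt hb)]
  · rw [integral_rpow (Or.inr ⟨by intro hc; apply hr; linarith [sub_eq_iff_eq_add.mp hc], h0⟩),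
      sub_add_cancel]

/-- pointwise two-point inequality via `cosh`. -/
lemma pointwise_key {x y : ℝ} (hx : 0 < x) (hy : 0 < y) {s t : ℝ}
    (hs : 1/2 ≤ s) (hst : s ≤ t) :
    x ^ (s - 1) * y ^ (-s) + x ^ (-s) * y ^ (s - 1)
      ≤ x ^ (t - 1) * y ^ (-t) + x ^ (-t) * y ^ (t - 1) := by
  set X := Real.log x with hX
  set Y := Real.log y with hY
  have hform : ∀ r : ℝ, x ^ (r - 1) * y ^ (-r) + x ^ (-r) * y ^ (r - 1)
      = 2 * Real.exp (-(X + Y)/2) * Real.cosh ((r - 1/2) * (X - Y)) := by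
    intro r
    rw [Real.rpow_def_of_pos hx, Real.rpow_def_of_pos hy,
        Real.rpow_def_of_pos hx, Real.rpow_def_of_pos hy, Real.cosh_eq]
    rw [show 2 * Real.exp (-(X + Y)/2) *
          ((Real.exp ((r - 1/2) * (X - Y)) + Real.exp (-((r - 1/2) * (X - Y)))) / 2)
        = Real.exp (-(X+Y)/2 + (r - 1/2)*(X-Y)) + Real.exp (-(X+Y)/2 + -((r-1/2)*(X-Y))) by
          rw [Real.exp_add, Real.exp_add]; ring]
    rw [← Real.exp_add, ← Real.exp_add, ← hX, ← hY,
      show -(X + Y)/2 + (r - 1/2) * (X - Y) = X * (r-1) + Y * (-r) by ring,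
      show -(X + Y)/2 + -((r - 1/2) * (X - Y)) = X * (-r) + Y * (r-1) by ring]
  rw [hform s, hform t]
  have hc : Real.cosh ((s - 1/2) * (X - Y)) ≤ Real.cosh ((t - 1/2) * (X - Y)) := by
    rw [Real.cosh_le_cosh, abs_mul, abs_mul]
    rw [abs_of_nonneg (by linarith : (0:ℝ) ≤ s - 1/2),
        abs_of_nonneg (by linarith : (0:ℝ) ≤ t - 1/2)]
    exact mul_le_mul_of_nonneg_right (by linarith) (abs_nonneg _)
  have h2 : (0:ℝ) < 2 * Real.exp (-(X + Y)/2) := by positivity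
  nlinarith [h2]

lemma intInt (c : ℝ) {a b : ℝ} (ha : 0 < a) (hb : 0 < b) :
    IntervalIntegrable (fun x : ℝ => x ^ c) MeasureTheory.volume b a := by
  apply ContinuousOn.intervalIntegrable
  apply ContinuousOn.rpow_const continuousOn_id
  intro x hx
  left
  have h0 : (0:ℝ) ∉ Set.uIcc b a := Set.notMem_uIcc_of_lt hb ha
  intro hx0; exact h0 (hx0 ▸ hx)

lemma psi_mono_of_le {a b : ℝ} (ha : 0 < a) (hb : 0 < b) (hba : b ≤ a) {s t : ℝ}
    (hs : 1/2 ≤ s) (hst : s ≤ t) :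
    alph a b s * alph a b (1 - s) ≤ alph a b t * alph a b (1 - t) := by
  -- `G r x = ∫ y in b..a, (x^(r-1) y^(-r) + x^(-r) y^(r-1)) dy`
  set G : ℝ → ℝ → ℝ := fun r x =>
    ∫ y in b..a, (x ^ (r-1) * y ^ (-r) + x ^ (-r) * y ^ (r-1)) with hG
  have hGval : ∀ r : ℝ, ∀ x : ℝ,
      G r x = x ^ (r-1) * alph a b (1 - r) + x ^ (-r) * alph a b r := by
    intro r x
    rw [hG]
    simp only
    rw [integral_add ((intInt (-r) ha hb).const_mul _) ((intInt (r-1) ha hb).const_mul _),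
        integral_const_mul, integral_const_mul,
        alph_integral ha hb r, alph_integral ha hb (1 - r)]
    norm_num
  have e2 : ∀ r : ℝ, alph a b (1 - r) = ∫ y in b..a, y ^ (-r) := by
    intro r
    rw [alph_integral ha hb (1 - r), show (1:ℝ) - r - 1 = -r by ring]
  have hint : ∀ r x : ℝ, IntervalIntegrable
      (fun y : ℝ => x ^ (r-1) * y ^ (-r) + x ^ (-r) * y ^ (r-1)) MeasureTheory.volume b a :=
    fun r x => ((intInt (-r) ha hb).const_mul _).add ((intInt (r-1) ha hb).const_mul _)
  have hGmono : ∀ x ∈ Set.Icc b a, G s x ≤ G t x := by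
    intro x hx
    refine integral_mono_on hba (hint s x) (hint t x) ?_
    intro y hy
    exact pointwise_key (lt_of_lt_of_le hb hx.1) (lt_of_lt_of_le hb hy.1) hs hst
  have hGfun : ∀ r : ℝ, G r = fun x => x ^ (r-1) * alph a b (1 - r) + x ^ (-r) * alph a b r :=
    fun r => funext (hGval r)
  have hval : ∀ r : ℝ, (∫ x in b..a, G r x) = 2 * (alph a b r * alph a b (1 - r)) := by
    intro r
    rw [hGfun r,
        integral_add ((intInt (r-1) ha hb).mul_const _) ((intInt (-r) ha hb).mul_const _),
        integral_mul_const, integral_mul_const,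
        ← alph_integral ha hb r, ← e2 r]
    ring
  have houter : (∫ x in b..a, G s x) ≤ ∫ x in b..a, G t x := by
    refine integral_mono_on hba ?_ ?_ hGmono
    · rw [hGfun s]
      exact ((intInt (s-1) ha hb).mul_const _).add ((intInt (-s) ha hb).mul_const _)
    · rw [hGfun t]
      exact ((intInt (t-1) ha hb).mul_const _).add ((intInt (-t) ha hb).mul_const _)
  rw [hval s, hval t] at houter
  linarith

/-- core monotonicity of `ψ(s) = α(s) α(1-s)` on `s ≥ 1/2`. -/
lemma psi_mono {a b : ℝ} (ha : 0 < a) (hb : 0 < b) {s t : ℝ}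
    (hs : 1/2 ≤ s) (hst : s ≤ t) :
    alph a b s * alph a b (1 - s) ≤ alph a b t * alph a b (1 - t) := by
  rcases le_total b a with hba | hab
  · exact psi_mono_of_le ha hb hba hs hst
  · have := psi_mono_of_le hb ha hab hs hst
    rw [alph_swap a b s, alph_swap a b (1-s), alph_swap a b t, alph_swap a b (1-t)]
    simpa [neg_mul_neg] using this

/-- `Φ_r(A,B) = α(1/r) α(1 - 1/r)` -/
def phi (r A B : ℝ) : ℝ := alph A B (1/r) * alph A B (1 - 1/r)

lemma phi_self (r A : ℝ) : phi r A A = 0 := by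
  unfold phi; rw [alph_self, zero_mul]

lemma phi_mono {A B : ℝ} (hA : 0 < A) (hB : 0 < B) {p q : ℝ}
    (hq : 0 < q) (hqp : q ≤ p) (hp2 : p ≤ 2) : phi p A B ≤ phi q A B := by
  have hp : 0 < p := lt_of_lt_of_le hq hqp
  refine psi_mono hA hB ?_ ?_
  · rw [div_le_div_iff₀ (by norm_num) hp]; linarith
  · exact one_div_le_one_div_of_le hq hqp

lemma phi_one {u v : ℝ} (hu : 0 < u) (hv : 0 < v) :
    phi 1 u v = (u - v) * (Real.log u - Real.log v) := by
  unfold phi alph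
  norm_num [Real.rpow_one]

lemma phi_ne_one {u v : ℝ} (hu : 0 < u) (hv : 0 < v) {r : ℝ} (hr0 : r ≠ 0) (hr1 : r ≠ 1) :
    phi r (u ^ r) (v ^ r) = r^2/(r-1) * ((u ^ (r-1) - v ^ (r-1)) * (u - v)) := by
  have h1r : (1:ℝ)/r ≠ 0 := one_div_ne_zero hr0
  have h1r' : 1 - 1/r ≠ 0 := by
    intro hc
    apply hr1
    field_simp at hc
    linarith
  have c1 : (u ^ r) ^ ((1:ℝ)/r) = u := by
    rw [← Real.rpow_mul hu.le, mul_one_div_cancel hr0, Real.rpow_one]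
  have c2 : (v ^ r) ^ ((1:ℝ)/r) = v := by
    rw [← Real.rpow_mul hv.le, mul_one_div_cancel hr0, Real.rpow_one]
  have c3 : (u ^ r) ^ (1 - (1:ℝ)/r) = u ^ (r - 1) := by
    rw [← Real.rpow_mul hu.le]
    congr 1
    field_simp
  have c4 : (v ^ r) ^ (1 - (1:ℝ)/r) = v ^ (r - 1) := by
    rw [← Real.rpow_mul hv.le]
    congr 1
    field_simp
  unfold phi alph
  rw [if_neg h1r, if_neg h1r', c1, c2, c3, c4]
  have hr1' : r - 1 ≠ 0 := sub_ne_zero.mpr hr1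
  field_simp


variable {Ω : Type*} [Fintype Ω] [DecidableEq Ω]

/-- matrix entries of `L`. -/
def kk (L : (Ω → ℝ) →ₗ[ℝ] (Ω → ℝ)) (x y : Ω) : ℝ :=
  L (fun z => if z = y then 1 else 0) x

variable {μ : Ω → ℝ} {L : (Ω → ℝ) →ₗ[ℝ] (Ω → ℝ)}

lemma Lmat_apply (L : (Ω → ℝ) →ₗ[ℝ] (Ω → ℝ)) (f : Ω → ℝ) (x : Ω) :
    L f x = ∑ y, f y * kk L x y := by
  have hf : f = fun z => ∑ y, f y * (if z = y then (1:ℝ) else 0) := by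
    funext z
    simp [mul_ite]
  conv_lhs => rw [hf]
  have : (fun z => ∑ y, f y * (if z = y then (1:ℝ) else 0))
      = ∑ y : Ω, f y • (fun z => if z = y then (1:ℝ) else 0) := by
    funext z
    simp [Finset.sum_apply]
  rw [this, map_sum]
  simp [Finset.sum_apply, kk]

lemma kk_rowsum (hL : IsGen μ L) (x : Ω) : ∑ y, kk L x y = 0 := by
  have h1 : L (fun _ => 1) x = 0 := by rw [hL.1]; rfl
  rw [Lmat_apply L (fun _ => 1) x] at h1
  simpa using h1

lemma kk_offdiag (hL : IsGen μ L) {x y : Ω} (hxy : x ≠ y) : kk L x y ≤ 0 := by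
  have h := hL.2.2.2 (fun z => if z = y then (-1:ℝ) else 0) x (by
    intro z
    simp only [if_neg hxy]
    split <;> norm_num)
  have he : (fun z => if z = y then (-1:ℝ) else 0)
      = (-1 : ℝ) • (fun z => if z = y then (1:ℝ) else 0) := by
    funext z; simp [ite_mul]
  rw [he, map_smul] at h
  simp only [Pi.smul_apply, smul_eq_mul, neg_mul, one_mul] at h
  have h2 : (0:ℝ) ≤ -kk L x y := h
  linarith [h2]

lemma kk_symm (hL : IsGen μ L) (x y : Ω) : μ x * kk L x y = μ y * kk L y x := by
  have h := hL.2.1 (fun z => if z = x then (1:ℝ) else 0) (fun z => if z = y then (1:ℝ) else 0)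
  unfold pexp at h
  simp only [ite_mul, one_mul, zero_mul] at h
  simpa [mul_ite, Finset.sum_ite_eq', kk] using h

/-- symmetric two-point sum. -/
def qsum (μ : Ω → ℝ) (L : (Ω → ℝ) →ₗ[ℝ] (Ω → ℝ)) (h : Ω → Ω → ℝ) : ℝ :=
  (1/2) * ∑ x, ∑ y, (-(μ x * kk L x y)) * h x y

lemma qsum_mono (hμpos : ∀ ω, 0 < μ ω) (hL : IsGen μ L) {h1 h2 : Ω → Ω → ℝ}
    (hd : ∀ x, h1 x x = h2 x x) (hoff : ∀ x y, x ≠ y → h1 x y ≤ h2 x y) :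
    qsum μ L h1 ≤ qsum μ L h2 := by
  unfold qsum
  apply mul_le_mul_of_nonneg_left _ (by norm_num : (0:ℝ) ≤ 1/2)
  apply Finset.sum_le_sum
  intro x _
  apply Finset.sum_le_sum
  intro y _
  rcases eq_or_ne x y with rfl | hxy
  · rw [hd x]
  · apply mul_le_mul_of_nonneg_left (hoff x y hxy)
    have h1 := kk_offdiag hL hxy
    have h2 := (hμpos x).le
    nlinarith

lemma qsum_congr {h1 h2 : Ω → Ω → ℝ} (h : ∀ x y, h1 x y = h2 x y) :
    qsum μ L h1 = qsum μ L h2 := by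
  unfold qsum
  congr 1
  exact Finset.sum_congr rfl fun x _ => Finset.sum_congr rfl fun y _ => by rw [h x y]

lemma qsum_smul (c : ℝ) (h : Ω → Ω → ℝ) :
    c * qsum μ L h = qsum μ L (fun x y => c * h x y) := by
  unfold qsum
  rw [← mul_assoc, mul_comm c (1/2 : ℝ), mul_assoc, Finset.mul_sum]
  congr 1
  apply Finset.sum_congr rfl
  intro x _
  rw [Finset.mul_sum]
  exact Finset.sum_congr rfl fun y _ => by ring

lemma dform_rep (hL : IsGen μ L) (F G : Ω → ℝ) :
    dform μ L F G = qsum μ L (fun x y => (F x - F y) * (G x - G y)) := by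
  have e1 : dform μ L F G = ∑ x, ∑ y, μ x * kk L x y * (F x * G y) := by
    unfold dform pexp
    apply Finset.sum_congr rfl
    intro x _
    show μ x * (F x * L G x) = ∑ y, μ x * kk L x y * (F x * G y)
    rw [Lmat_apply L G x, Finset.mul_sum, Finset.mul_sum]
    exact Finset.sum_congr rfl fun y _ => by ring
  have ediagF : ∀ h : Ω → ℝ, (∑ x, ∑ y, μ x * kk L x y * h x) = 0 := by
    intro h
    apply Finset.sum_eq_zero
    intro x _
    have e : ∑ y, μ x * kk L x y * h x = (μ x * h x) * ∑ y, kk L x y := by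
      rw [Finset.mul_sum]
      exact Finset.sum_congr rfl fun y _ => by ring
    rw [e, kk_rowsum hL x, mul_zero]
  have ediagG : ∀ h : Ω → ℝ, (∑ x, ∑ y, μ x * kk L x y * h y) = 0 := by
    intro h
    have e : ∑ x, ∑ y, μ x * kk L x y * h y = ∑ x, ∑ y, μ y * kk L y x * h y :=
      Finset.sum_congr rfl fun x _ => Finset.sum_congr rfl fun y _ => by
        rw [show μ x * kk L x y * h y = (μ x * kk L x y) * h y by ring, kk_symm hL x y]
    rw [e, Finset.sum_comm]
    exact ediagF h
  have ecross : ∑ x, ∑ y, μ x * kk L x y * (F y * G x)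
      = ∑ x, ∑ y, μ x * kk L x y * (F x * G y) := by
    have e : ∑ x, ∑ y, μ x * kk L x y * (F y * G x)
        = ∑ x, ∑ y, μ y * kk L y x * (F y * G x) :=
      Finset.sum_congr rfl fun x _ => Finset.sum_congr rfl fun y _ => by
        rw [show μ x * kk L x y * (F y * G x) = (μ x * kk L x y) * (F y * G x) by ring,
          kk_symm hL x y]
    rw [e, Finset.sum_comm]
  have expand : ∑ x, ∑ y, (-(μ x * kk L x y)) * ((F x - F y) * (G x - G y))
      = ((∑ x, ∑ y, μ x * kk L x y * (F x * G y))
        + ∑ x, ∑ y, μ x * kk L x y * (F y * G x))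
        - (∑ x, ∑ y, μ x * kk L x y * (F x * G x))
        - ∑ x, ∑ y, μ x * kk L x y * (F y * G y) := by
    rw [← Finset.sum_add_distrib, ← Finset.sum_sub_distrib, ← Finset.sum_sub_distrib]
    apply Finset.sum_congr rfl
    intro x _
    rw [← Finset.sum_add_distrib, ← Finset.sum_sub_distrib, ← Finset.sum_sub_distrib]
    exact Finset.sum_congr rfl fun y _ => by ring
  unfold qsum
  rw [expand, ediagF (fun x => F x * G x), ediagG (fun y => F y * G y), ecross, e1]
  ring

lemma qsum_phi_ne_one (hL : IsGen μ L) {r : ℝ} (hr0 : r ≠ 0) (hr1 : r ≠ 1)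
    (f : Ω → ℝ) (hf : ∀ ω, 0 < f ω) :
    qsum μ L (fun x y => phi r (f x ^ r) (f y ^ r))
      = r^2/(r-1) * dform μ L (fun ω => f ω ^ (r-1)) f := by
  rw [dform_rep hL, qsum_smul]
  apply qsum_congr
  intro x y
  rw [phi_ne_one (hf x) (hf y) hr0 hr1]

lemma qsum_phi_one (hL : IsGen μ L) (f : Ω → ℝ) (hf : ∀ ω, 0 < f ω) :
    qsum μ L (fun x y => phi 1 (f x) (f y)) = dform μ L f (fun ω => Real.log (f ω)) := by
  rw [dform_rep hL]
  apply qsum_congr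
  intro x y
  rw [phi_one (hf x) (hf y)]

lemma logSob_step (hμpos : ∀ ω, 0 < μ ω) (hL : IsGen μ L) {p q C : ℝ}
    (hC : 0 ≤ C) (hq : 0 < q) (hqp : q ≤ p) (hp2 : p ≤ 2)
    (h : LogSob μ L p C) : LogSob μ L q C := by
  have hp : 0 < p := lt_of_lt_of_le hq hqp
  have main : ∀ f : Ω → ℝ, (∀ ω, 0 < f ω) →
      entE μ (fun ω => f ω ^ q)
        ≤ C / 4 * qsum μ L (fun x y => phi q (f x ^ q) (f y ^ q)) := by
    intro f hf
    set g : Ω → ℝ := fun ω => f ω ^ (q/p) with hgdef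
    have hg : ∀ ω, 0 < g ω := fun ω => Real.rpow_pos_of_pos (hf ω) _
    have hgp : ∀ ω, (g ω) ^ p = f ω ^ q := by
      intro ω
      show (f ω ^ (q/p)) ^ p = f ω ^ q
      rw [← Real.rpow_mul (hf ω).le, div_mul_cancel₀ q hp.ne']
    have step1 : entE μ (fun ω => f ω ^ q)
        ≤ C / 4 * qsum μ L (fun x y => phi p (f x ^ q) (f y ^ q)) := by
      by_cases hp1 : p = 1
      · subst hp1
        unfold LogSob at h
        rw [if_neg one_ne_zero, if_pos rfl] at h
        have egq : (fun ω => f ω ^ q) = g := by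
          funext ω
          show f ω ^ q = f ω ^ (q/1)
          rw [div_one]
        rw [egq]
        calc entE μ g ≤ C / 4 * dform μ L g (fun ω => Real.log (g ω)) := h g hg
          _ = C / 4 * qsum μ L (fun x y => phi 1 (g x ^ (1:ℝ)) (g y ^ (1:ℝ))) := by
              rw [show (fun (x y : Ω) => phi 1 (g x ^ (1:ℝ)) (g y ^ (1:ℝ)))
                  = fun x y => phi 1 (g x) (g y) by
                funext x y; rw [Real.rpow_one, Real.rpow_one]]
              rw [qsum_phi_one hL g hg]
          _ = C / 4 * qsum μ L (fun x y => phi 1 (f x ^ q) (f y ^ q)) := by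
              congr 1
              exact qsum_congr fun x y => by rw [hgp x, hgp y]
      · unfold LogSob at h
        rw [if_neg hp.ne', if_neg hp1] at h
        have h2 := h g hg
        have e1 : (fun ω => g ω ^ p) = fun ω => f ω ^ q := funext hgp
        rw [e1] at h2
        have e2 : qsum μ L (fun x y => phi p (f x ^ q) (f y ^ q))
            = p^2/(p-1) * dform μ L (fun ω => g ω ^ (p-1)) g := by
          rw [← qsum_phi_ne_one hL hp.ne' hp1 g hg]
          exact qsum_congr fun x y => by rw [hgp x, hgp y]
        have e3 : C / 4 * qsum μ L (fun x y => phi p (f x ^ q) (f y ^ q))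
            = C * p^2 / (4*(p-1)) * dform μ L (fun ω => g ω ^ (p-1)) g := by
          rw [e2]
          have hne : p - 1 ≠ 0 := sub_ne_zero.mpr hp1
          field_simp
        rw [e3]
        exact h2
    have step2 : qsum μ L (fun x y => phi p (f x ^ q) (f y ^ q))
        ≤ qsum μ L (fun x y => phi q (f x ^ q) (f y ^ q)) := by
      apply qsum_mono hμpos hL
      · intro x
        rw [phi_self, phi_self]
      · intro x y _
        exact phi_mono (Real.rpow_pos_of_pos (hf x) _) (Real.rpow_pos_of_pos (hf y) _)
          hq hqp hp2
    exact le_trans step1 (mul_le_mul_of_nonneg_left step2 (by linarith : (0:ℝ) ≤ C / 4))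
  unfold LogSob
  rw [if_neg hq.ne']
  by_cases hq1 : q = 1
  · subst hq1
    rw [if_pos rfl]
    intro f hf
    have hm := main f hf
    have e1 : (fun ω => f ω ^ (1:ℝ)) = f := by
      funext ω; exact Real.rpow_one _
    rw [e1] at hm
    calc entE μ f ≤ C / 4 * qsum μ L (fun x y => phi 1 (f x ^ (1:ℝ)) (f y ^ (1:ℝ))) := hm
      _ = C / 4 * dform μ L f (fun ω => Real.log (f ω)) := by
          rw [show (fun (x y : Ω) => phi 1 (f x ^ (1:ℝ)) (f y ^ (1:ℝ)))
              = fun x y => phi 1 (f x) (f y) by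
            funext x y; rw [Real.rpow_one, Real.rpow_one]]
          rw [qsum_phi_one hL f hf]
  · rw [if_neg hq1]
    intro f hf
    have hm := main f hf
    rw [qsum_phi_ne_one hL hq.ne' hq1 f hf] at hm
    calc entE μ (fun ω => f ω ^ q)
        ≤ C / 4 * (q^2/(q-1) * dform μ L (fun ω => f ω ^ (q-1)) f) := hm
      _ = C * q ^ 2 / (4*(q-1)) * dform μ L (fun ω => f ω ^ (q-1)) f := by
          have hne : q - 1 ≠ 0 := sub_ne_zero.mpr hq1
          field_simp

open Filter Topology in
lemma logSob_zero (hμpos : ∀ ω, 0 < μ ω) (hμ1 : ∑ ω, μ ω = 1) (hL : IsGen μ L) {p C : ℝ}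
    (hC : 0 ≤ C) (hp : 0 < p) (hp2 : p ≤ 2) (h : LogSob μ L p C) : LogSob μ L 0 C := by
  unfold LogSob
  rw [if_pos rfl]
  intro f hf
  set g : Ω → ℝ := fun ω => Real.log (f ω) with hgdef
  have hexp : ∀ (ω : Ω) (q : ℝ), f ω ^ q = Real.exp (g ω * q) := fun ω q =>
    Real.rpow_def_of_pos (hf ω) q
  have hexpg : ∀ ω : Ω, Real.exp (g ω) = f ω := fun ω => Real.exp_log (hf ω)
  set r0 : ℝ := min p (1/2) with hr0def
  have hr0 : 0 < r0 := lt_min hp (by norm_num)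
  have hr0' : r0 ≤ 1/2 := min_le_right _ _
  set D : ℝ → ℝ := fun q => dform μ L (fun ω => f ω ^ (q-1)) f with hDdef
  have hqLS : ∀ q : ℝ, 0 < q → q < r0 →
      entE μ (fun ω => f ω ^ q) ≤ C * q^2/(4*(q-1)) * D q := by
    intro q hq hqr
    have hq1 : q ≠ 1 := by
      have : q < 1/2 := lt_of_lt_of_le hqr hr0'
      intro hc; rw [hc] at this; norm_num at this
    have hstep := logSob_step hμpos hL hC hq
      (le_trans hqr.le (min_le_left _ _)) hp2 h
    unfold LogSob at hstep
    rw [if_neg hq.ne', if_neg hq1] at hstep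
    exact hstep f hf
  -- auxiliary functions
  set F : ℝ → ℝ := fun q => ∑ ω, μ ω * Real.exp (g ω * q) with hFdef
  set F1 : ℝ → ℝ := fun q => ∑ ω, μ ω * (g ω * Real.exp (g ω * q)) with hF1def
  set F2 : ℝ → ℝ := fun q => ∑ ω, μ ω * (g ω ^ 2 * Real.exp (g ω * q)) with hF2def
  have hFpos : ∀ q, 0 < F q := by
    intro q
    have hne : (Finset.univ : Finset Ω).Nonempty := by
      rcases (Finset.univ : Finset Ω).eq_empty_or_nonempty with he | hne
      · rw [he, Finset.sum_empty] at hμ1; norm_num at hμ1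
      · exact hne
    show 0 < ∑ ω, μ ω * Real.exp (g ω * q)
    exact Finset.sum_pos (fun ω _ => mul_pos (hμpos ω) (Real.exp_pos _)) hne
  have hF0 : F 0 = 1 := by
    rw [hFdef]
    simpa using hμ1
  set H : ℝ → ℝ := fun q => q * F1 q - F q * Real.log (F q) with hHdef
  have hent : ∀ q : ℝ, entE μ (fun ω => f ω ^ q) = H q := by
    intro q
    have e1 : pexp μ (fun ω => f ω ^ q) = F q := by
      unfold pexp
      exact Finset.sum_congr rfl fun ω _ => by
        show μ ω * f ω ^ q = μ ω * Real.exp (g ω * q)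
        rw [hexp ω q]
    have e2 : pexp μ (fun ω => f ω ^ q * Real.log (f ω ^ q)) = q * F1 q := by
      unfold pexp
      rw [hF1def, Finset.mul_sum]
      apply Finset.sum_congr rfl
      intro ω _
      show μ ω * (f ω ^ q * Real.log (f ω ^ q)) = q * (μ ω * (g ω * Real.exp (g ω * q)))
      rw [hexp ω q, Real.log_exp]
      ring
    unfold entE
    rw [e1, e2, hHdef]
  -- derivatives
  have hFd : ∀ q, HasDerivAt F (F1 q) q := by
    intro q
    have := HasDerivAt.sum (fun ω (_ : ω ∈ Finset.univ) =>
      ((((hasDerivAt_id q).const_mul (g ω)).exp).const_mul (μ ω) :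
        HasDerivAt (fun x => μ ω * Real.exp (g ω * x))
          (μ ω * (Real.exp (g ω * q) * (g ω * 1))) q))
    rw [Finset.sum_fn] at this
    convert this using 1
    any_goals rfl
    rw [hF1def]
    exact Finset.sum_congr rfl fun ω _ => by simp only [id_eq]; ring
  have hF1d : ∀ q, HasDerivAt F1 (F2 q) q := by
    intro q
    have := HasDerivAt.sum (fun ω (_ : ω ∈ Finset.univ) =>
      (((((hasDerivAt_id q).const_mul (g ω)).exp).const_mul (g ω)).const_mul (μ ω) :
        HasDerivAt (fun x => μ ω * (g ω * Real.exp (g ω * x)))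
          (μ ω * (g ω * (Real.exp (g ω * q) * (g ω * 1)))) q))
    rw [Finset.sum_fn] at this
    convert this using 1
    any_goals rfl
    rw [hF2def]
    exact Finset.sum_congr rfl fun ω _ => by simp only [id_eq]; ring
  have hHd : ∀ q, HasDerivAt H (q * F2 q - F1 q * Real.log (F q)) q := by
    intro q
    have h1 : HasDerivAt (fun x => x * F1 x) (1 * F1 q + q * F2 q) q :=
      (hasDerivAt_id q).mul (hF1d q)
    have h2 : HasDerivAt (fun x => F x * Real.log (F x))
        (F1 q * Real.log (F q) + F q * (F1 q / F q)) q :=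
      (hFd q).mul ((hFd q).log (hFpos q).ne')
    have h3 := h1.sub h2
    convert h3 using 1
    any_goals rfl
    have hne : F q ≠ 0 := (hFpos q).ne'
    field_simp
    ring
  -- limit of H q / q^2
  have hT3 : Tendsto (fun q => Real.log (F q) / q) (𝓝[>] (0:ℝ)) (𝓝 (F1 0)) := by
    have hld : HasDerivAt (fun x => Real.log (F x)) (F1 0 / F 0) 0 := (hFd 0).log (hFpos 0).ne'
    rw [hF0, div_one] at hld
    have := hasDerivAt_iff_tendsto_slope.mp hld
    have h2 := this.mono_left (nhdsWithin_mono 0 (fun x hx => ne_of_gt hx))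
    apply h2.congr
    intro q
    rw [slope_def_field, hF0, Real.log_one, sub_zero, sub_zero, div_eq_div_iff_comm]
  have hdiv : Tendsto (fun q => (q * F2 q - F1 q * Real.log (F q)) / (2*q))
      (𝓝[>] (0:ℝ)) (𝓝 ((F2 0 - F1 0 * F1 0)/2)) := by
    have hc2 : Tendsto F2 (𝓝[>] (0:ℝ)) (𝓝 (F2 0)) := by
      have : Continuous F2 := by
        rw [hF2def]
        exact continuous_finset_sum _ fun ω _ => by fun_prop
      exact this.continuousAt.tendsto.mono_left nhdsWithin_le_nhds
    have hc1 : Tendsto F1 (𝓝[>] (0:ℝ)) (𝓝 (F1 0)) :=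
      (hF1d 0).continuousAt.tendsto.mono_left nhdsWithin_le_nhds
    have hmain : Tendsto (fun q => (F2 q - F1 q * (Real.log (F q) / q))/2)
        (𝓝[>] (0:ℝ)) (𝓝 ((F2 0 - F1 0 * F1 0)/2)) :=
      ((hc2.sub (hc1.mul hT3)).div_const 2)
    apply hmain.congr'
    filter_upwards [self_mem_nhdsWithin] with q (hq : 0 < q)
    field_simp
  have hHlim : Tendsto (fun q => H q / q^2) (𝓝[>] (0:ℝ)) (𝓝 ((F2 0 - F1 0 * F1 0)/2)) := by
    apply HasDerivAt.lhopital_zero_nhdsGT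
      (f' := fun q => q * F2 q - F1 q * Real.log (F q)) (g' := fun q => 2*q)
    · exact Eventually.of_forall hHd
    · apply Eventually.of_forall
      intro q
      simpa using ((hasDerivAt_pow 2 q) : HasDerivAt (fun x => x^2) _ q)
    · filter_upwards [self_mem_nhdsWithin] with q (hq : 0 < q)
      positivity
    · have hH0 : H 0 = 0 := by
        rw [hHdef]
        simp [hF0]
      have := (hHd 0).continuousAt.tendsto.mono_left (nhdsWithin_le_nhds (s := Set.Ioi (0:ℝ)))
      rwa [hH0] at this
    · have : Tendsto (fun q : ℝ => q^2) (𝓝[>] (0:ℝ)) (𝓝 ((0:ℝ)^2)) :=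
        (continuous_pow 2).continuousAt.tendsto.mono_left nhdsWithin_le_nhds
      simpa using this
    · exact hdiv
  -- limit of the right-hand side
  have hDlim : Tendsto (fun q => C/(4*(q-1)) * D q) (𝓝[>] (0:ℝ))
      (𝓝 (-(C/4) * dform μ L (fun ω => (f ω)⁻¹) f)) := by
    have hDq : ∀ q : ℝ, D q = ∑ ω, μ ω * (Real.exp (g ω * (q-1)) * L f ω) := by
      intro q
      rw [hDdef]
      unfold dform pexp
      exact Finset.sum_congr rfl fun ω _ => by
        show μ ω * (f ω ^ (q-1) * L f ω) = μ ω * (Real.exp (g ω * (q-1)) * L f ω)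
        rw [hexp ω (q-1)]
    have hDc : Tendsto D (𝓝[>] (0:ℝ)) (𝓝 (D 0)) := by
      have : Continuous D := by
        have : D = fun q => ∑ ω, μ ω * (Real.exp (g ω * (q-1)) * L f ω) := funext hDq
        rw [this]
        exact continuous_finset_sum _ fun ω _ => by fun_prop
      exact this.continuousAt.tendsto.mono_left nhdsWithin_le_nhds
    have hD0 : D 0 = dform μ L (fun ω => (f ω)⁻¹) f := by
      rw [hDq 0]
      unfold dform pexp
      apply Finset.sum_congr rfl
      intro ω _
      rw [show g ω * ((0:ℝ)-1) = -g ω by ring, Real.exp_neg, hexpg ω]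
    have hcoef : Tendsto (fun q : ℝ => C/(4*(q-1))) (𝓝[>] (0:ℝ)) (𝓝 (C/(4*((0:ℝ)-1)))) := by
      apply Tendsto.mono_left _ nhdsWithin_le_nhds
      apply ContinuousAt.tendsto
      have : (4:ℝ)*((0:ℝ)-1) ≠ 0 := by norm_num
      fun_prop (disch := norm_num)
    have := hcoef.mul hDc
    rw [hD0] at this
    convert this using 1
    ring
  -- eventual inequality
  have hev : ∀ᶠ q in 𝓝[>] (0:ℝ), H q / q^2 ≤ C/(4*(q-1)) * D q := by
    filter_upwards [Ioo_mem_nhdsGT_of_mem (Set.left_mem_Ico.mpr hr0)] with q hq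
    obtain ⟨hq0, hqr⟩ := hq
    have hle := hqLS q hq0 hqr
    rw [hent q] at hle
    have hq1ne : q - 1 ≠ 0 := by
      have : q < 1/2 := lt_of_lt_of_le hqr hr0'
      intro hc
      have : q = 1 := by linarith
      linarith
    calc H q / q^2 ≤ (C * q^2/(4*(q-1)) * D q) / q^2 := by gcongr
      _ = C/(4*(q-1)) * D q := by
          field_simp
  -- conclude
  have hfinal : (F2 0 - F1 0 * F1 0)/2 ≤ -(C/4) * dform μ L (fun ω => (f ω)⁻¹) f :=
    le_of_tendsto_of_tendsto hHlim hDlim hev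
  have hvar : varE μ (fun ω => Real.log (f ω)) = F2 0 - F1 0 * F1 0 := by
    unfold varE pexp
    rw [hF2def, hF1def]
    simp only [mul_zero, Real.exp_zero, mul_one]
    rw [sq]
  have hsymm : dform μ L f (fun ω => (f ω)⁻¹) = dform μ L (fun ω => (f ω)⁻¹) f :=
    hL.2.1 f (fun ω => (f ω)⁻¹)
  rw [hvar, hsymm]
  linarith [hfinal]


end LSaux

/-- monotonicity of the `p`-logSob inequalities on `[0,2]`. -/
theorem logSob_monotone [Fintype Ω] (μ : Ω → ℝ)
    (hμpos : ∀ ω, 0 < μ ω) (hμ1 : ∑ ω, μ ω = 1)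
    (L : (Ω → ℝ) →ₗ[ℝ] (Ω → ℝ)) (hL : IsGen μ L)
    (p q C : ℝ) (hC : 0 < C) (hq0 : 0 ≤ q) (hqp : q ≤ p) (hp2 : p ≤ 2)
    (h : LogSob μ L p C) : LogSob μ L q C := by
  classical
  rcases eq_or_lt_of_le hq0 with hq | hq
  · subst hq
    rcases eq_or_lt_of_le (le_trans hq0 hqp) with hp | hp
    · exact hp ▸ h
    · exact LSaux.logSob_zero hμpos hμ1 hL hC.le hp hp2 h
  · exact LSaux.logSob_step hμpos hL hC.le hq hqp hp2 h

end
end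

section
/- Let p, q ∈ (0,2] \ {1} with p > q. Then for every g : Ω → (0,∞), one has q·q'·𝓔(g^{1/q}, g^{1/q'}) ≥ p·p'·𝓔(g^{1/p}, g^{1/p'}), where p' = p/(p−1) and q' = q/(q−1). (Extended Stroock–Varopoulos inequality; note that some of the exponents 1/p', 1/q' may be negative.) -/
open Real Finset

noncomputable section

variable {Ω : Type*}

namespace SVAux


lemma sinh_le_mul_cosh {x : ℝ} (hx : 0 ≤ x) : Real.sinh x ≤ x * Real.cosh x := by
  have hmono : MonotoneOn (fun y : ℝ => y * Real.cosh y - Real.sinh y) (Set.Ici 0) := by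
    apply monotoneOn_of_hasDerivWithinAt_nonneg (f' := fun y => y * Real.sinh y) (convex_Ici 0)
    · exact ((continuous_id.mul Real.continuous_cosh).sub Real.continuous_sinh).continuousOn
    · intro y _
      have h1 : HasDerivAt (fun y : ℝ => y * Real.cosh y - Real.sinh y)
          (1 * Real.cosh y + y * Real.sinh y - Real.cosh y) y :=
        ((hasDerivAt_id y).mul (Real.hasDerivAt_cosh y)).sub (Real.hasDerivAt_sinh y)
      have h2 : (1 : ℝ) * Real.cosh y + y * Real.sinh y - Real.cosh y = y * Real.sinh y := by ring
      exact (h2 ▸ h1).hasDerivWithinAt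
    · intro y hy
      rw [interior_Ici] at hy
      exact mul_nonneg (le_of_lt hy) (Real.sinh_nonneg_iff.mpr (le_of_lt hy))
  have := hmono Set.self_mem_Ici (Set.mem_Ici.mpr hx) hx
  simp only [Real.cosh_zero, Real.sinh_zero, zero_mul, sub_zero] at this
  linarith

lemma mul_sinh_le {x y : ℝ} (hx : 0 ≤ x) (hxy : x ≤ y) : y * Real.sinh x ≤ x * Real.sinh y := by
  have hmono : MonotoneOn (fun z : ℝ => x * Real.sinh z - z * Real.sinh x) (Set.Ici x) := by
    apply monotoneOn_of_hasDerivWithinAt_nonneg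
      (f' := fun z => x * Real.cosh z - Real.sinh x) (convex_Ici x)
    · exact ((continuous_const.mul Real.continuous_sinh).sub
        (continuous_id.mul continuous_const)).continuousOn
    · intro z _
      have h1 : HasDerivAt (fun z : ℝ => x * Real.sinh z - z * Real.sinh x)
          (x * Real.cosh z - 1 * Real.sinh x) z :=
        ((Real.hasDerivAt_sinh z).const_mul x).sub ((hasDerivAt_id z).mul_const (Real.sinh x))
      have h2 : x * Real.cosh z - 1 * Real.sinh x = x * Real.cosh z - Real.sinh x := by ring
      exact (h2 ▸ h1).hasDerivWithinAt
    · intro z hz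
      rw [interior_Ici] at hz
      have h1 : Real.sinh x ≤ x * Real.cosh x := sinh_le_mul_cosh hx
      have h2 : Real.cosh x ≤ Real.cosh z := by
        rw [Real.cosh_le_cosh, abs_of_nonneg hx, abs_of_nonneg (hx.trans hz.le)]
        exact hz.le
      have h3 : x * Real.cosh x ≤ x * Real.cosh z := mul_le_mul_of_nonneg_left h2 hx
      linarith
  have := hmono Set.self_mem_Ici (Set.mem_Ici.mpr hxy) hxy
  simp only at this
  linarith

lemma convexOn_cosh_sqrt : ConvexOn ℝ (Set.Ici (0:ℝ)) (fun t => Real.cosh (Real.sqrt t)) := by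
  have hderiv : ∀ t : ℝ, 0 < t → HasDerivAt (fun t => Real.cosh (Real.sqrt t))
      (Real.sinh (Real.sqrt t) * (1 / (2 * Real.sqrt t))) t := by
    intro t ht
    exact (Real.hasDerivAt_cosh (Real.sqrt t)).comp t (Real.hasDerivAt_sqrt ht.ne')
  apply MonotoneOn.convexOn_of_deriv (convex_Ici 0)
  · exact (Real.continuous_cosh.comp Real.continuous_sqrt).continuousOn
  · intro t ht
    rw [interior_Ici] at ht
    exact ((hderiv t ht).differentiableAt).differentiableWithinAt
  · rw [interior_Ici]
    intro t1 h1 t2 h2 h12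
    rw [(hderiv t1 h1).deriv, (hderiv t2 h2).deriv]
    have hx : 0 < Real.sqrt t1 := Real.sqrt_pos.mpr h1
    have hy : 0 < Real.sqrt t2 := Real.sqrt_pos.mpr h2
    have hxy : Real.sqrt t1 ≤ Real.sqrt t2 := Real.sqrt_le_sqrt h12
    have key := mul_sinh_le hx.le hxy
    rw [mul_one_div, mul_one_div, div_le_div_iff₀ (by positivity) (by positivity)]
    nlinarith [key]


lemma core_cosh {d u v : ℝ} (hu : 0 ≤ u) (huv : u ≤ v) (hu1 : u ≠ 1) (hv1 : v ≠ 1) :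
    (Real.cosh (u * d) - Real.cosh d) / (u ^ 2 - 1) ≤
      (Real.cosh (v * d) - Real.cosh d) / (v ^ 2 - 1) := by
  rcases eq_or_ne d 0 with rfl | hd
  · simp
  have hd2 : (0:ℝ) < d ^ 2 := by positivity
  have hv0 : 0 ≤ v := hu.trans huv
  have hne : ∀ w : ℝ, 0 ≤ w → w ≠ 1 → (w * d) ^ 2 ≠ d ^ 2 := by
    intro w hw hw1 hcon
    have h0 : (w - 1) * (w + 1) * d ^ 2 = 0 := by linear_combination hcon
    rcases mul_eq_zero.mp h0 with h | h
    · rcases mul_eq_zero.mp h with h | h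
      · exact hw1 (by linarith)
      · linarith [hw1 (by linarith : w = 1)]
    · exact hd2.ne' h
  have hxy : (u * d) ^ 2 ≤ (v * d) ^ 2 := by
    have h2 : u ^ 2 ≤ v ^ 2 := pow_le_pow_left₀ hu huv 2
    calc (u * d) ^ 2 = u ^ 2 * d ^ 2 := by ring
      _ ≤ v ^ 2 * d ^ 2 := mul_le_mul_of_nonneg_right h2 hd2.le
      _ = (v * d) ^ 2 := by ring
  have hsec := convexOn_cosh_sqrt.secant_mono (a := d ^ 2) (x := (u * d) ^ 2) (y := (v * d) ^ 2)
    (Set.mem_Ici.mpr (sq_nonneg d)) (Set.mem_Ici.mpr (sq_nonneg _)) (Set.mem_Ici.mpr (sq_nonneg _))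
    (hne u hu hu1) (hne v hv0 hv1) hxy
  have hcu : Real.cosh (Real.sqrt ((u * d) ^ 2)) = Real.cosh (u * d) := by
    rw [Real.sqrt_sq_eq_abs, Real.cosh_abs]
  have hcv : Real.cosh (Real.sqrt ((v * d) ^ 2)) = Real.cosh (v * d) := by
    rw [Real.sqrt_sq_eq_abs, Real.cosh_abs]
  have hcd : Real.cosh (Real.sqrt (d ^ 2)) = Real.cosh d := by
    rw [Real.sqrt_sq_eq_abs, Real.cosh_abs]
  simp only [hcu, hcv, hcd] at hsec
  have hru : (u * d) ^ 2 - d ^ 2 = (u ^ 2 - 1) * d ^ 2 := by ring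
  have hrv : (v * d) ^ 2 - d ^ 2 = (v ^ 2 - 1) * d ^ 2 := by ring
  rw [hru, hrv, ← div_div, ← div_div] at hsec
  exact (div_le_div_iff_of_pos_right hd2).mp hsec

lemma key_st {a b : ℝ} (ha : 0 < a) (hb : 0 < b) {s t : ℝ} (hs : 1/2 ≤ s) (hst : s ≤ t)
    (hs1 : s ≠ 1) (ht1 : t ≠ 1) :
    (a ^ s - b ^ s) * (a ^ (1 - s) - b ^ (1 - s)) / (s * (1 - s)) ≤
      (a ^ t - b ^ t) * (a ^ (1 - t) - b ^ (1 - t)) / (t * (1 - t)) := by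
  set m : ℝ := (Real.log a + Real.log b) / 2 with hm
  set d : ℝ := (Real.log a - Real.log b) / 2 with hd
  have hdiff : ∀ r : ℝ, a ^ r - b ^ r = 2 * Real.exp (r * m) * Real.sinh (r * d) := by
    intro r
    rw [Real.rpow_def_of_pos ha, Real.rpow_def_of_pos hb, Real.sinh_eq]
    have e1 : Real.log a * r = r * m + r * d := by rw [hm, hd]; ring
    have e2 : Real.log b * r = r * m + -(r * d) := by rw [hm, hd]; ring
    rw [e1, e2, Real.exp_add, Real.exp_add]; ring
  have hsinh2 : ∀ A B : ℝ, Real.sinh A * Real.sinh B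
      = (Real.cosh (A + B) - Real.cosh (A - B)) / 2 := by
    intro A B; rw [Real.cosh_add, Real.cosh_sub]; ring
  have hprod : ∀ r : ℝ, (a ^ r - b ^ r) * (a ^ (1 - r) - b ^ (1 - r))
      = 2 * Real.exp m * (Real.cosh d - Real.cosh ((2 * r - 1) * d)) := by
    intro r
    rw [hdiff r, hdiff (1 - r)]
    have h2 : Real.exp (r * m) * Real.exp ((1 - r) * m) = Real.exp m := by
      rw [← Real.exp_add]; congr 1; ring
    have h3 := hsinh2 (r * d) ((1 - r) * d)
    have h4 : r * d + (1 - r) * d = d := by ring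
    have h5 : r * d - (1 - r) * d = (2 * r - 1) * d := by ring
    rw [h4, h5] at h3
    calc (2 * Real.exp (r * m) * Real.sinh (r * d)) *
          (2 * Real.exp ((1 - r) * m) * Real.sinh ((1 - r) * d))
        = 4 * (Real.exp (r * m) * Real.exp ((1 - r) * m)) *
            (Real.sinh (r * d) * Real.sinh ((1 - r) * d)) := by ring
      _ = 4 * Real.exp m * ((Real.cosh d - Real.cosh ((2 * r - 1) * d)) / 2) := by rw [h2, h3]
      _ = 2 * Real.exp m * (Real.cosh d - Real.cosh ((2 * r - 1) * d)) := by ring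
  have hs0 : s ≠ 0 := by intro h; rw [h] at hs; norm_num at hs
  have ht0 : t ≠ 0 := by intro h; rw [h] at hst; linarith
  have hs1' : 1 - s ≠ 0 := fun h => hs1 (by linarith)
  have ht1' : 1 - t ≠ 0 := fun h => ht1 (by linarith)
  have hdiv : ∀ r : ℝ, r ≠ 0 → 1 - r ≠ 0 →
      2 * Real.exp m * (Real.cosh d - Real.cosh ((2 * r - 1) * d)) / (r * (1 - r))
      = 8 * Real.exp m * ((Real.cosh ((2 * r - 1) * d) - Real.cosh d) / ((2 * r - 1) ^ 2 - 1)) := by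
    intro r hr0 hr1
    have hden : (2 * r - 1) ^ 2 - 1 ≠ 0 := by
      intro h
      have h2 : (-4 : ℝ) * (r * (1 - r)) = 0 := by linear_combination h
      have h3 : r * (1 - r) ≠ 0 := mul_ne_zero hr0 hr1
      apply h3; linarith
    field_simp
    ring
  rw [hprod s, hprod t, hdiv s hs0 hs1', hdiv t ht0 ht1']
  have hcore := core_cosh (d := d) (u := 2 * s - 1) (v := 2 * t - 1)
    (by linarith) (by linarith) (fun h => hs1 (by linarith)) (fun h => ht1 (by linarith))
  have h8 : (0:ℝ) ≤ 8 * Real.exp m := by positivity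
  exact mul_le_mul_of_nonneg_left hcore h8

lemma key_pq {a b : ℝ} (ha : 0 < a) (hb : 0 < b) {p q : ℝ} (hq0 : 0 < q) (hp2 : p ≤ 2)
    (hq1 : q ≠ 1) (hp1 : p ≠ 1) (hqp : q < p) :
    p * (p / (p - 1)) *
        ((a ^ (1 / p) - b ^ (1 / p)) * (a ^ (1 / (p / (p - 1))) - b ^ (1 / (p / (p - 1))))) ≤
      q * (q / (q - 1)) *
        ((a ^ (1 / q) - b ^ (1 / q)) * (a ^ (1 / (q / (q - 1))) - b ^ (1 / (q / (q - 1))))) := by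
  have hp0 : 0 < p := hq0.trans hqp
  have hp1' : p - 1 ≠ 0 := sub_ne_zero.mpr hp1
  have hq1' : q - 1 ≠ 0 := sub_ne_zero.mpr hq1
  have hip : 1 / (p / (p - 1)) = 1 - 1 / p := by
    rw [one_div_div]; field_simp
  have hiq : 1 / (q / (q - 1)) = 1 - 1 / q := by
    rw [one_div_div]; field_simp
  have hcoef : ∀ r : ℝ, 0 < r → r - 1 ≠ 0 → ∀ X : ℝ,
      r * (r / (r - 1)) * X = X / ((1 / r) * (1 - 1 / r)) := by
    intro r hr hr1 X
    have h1r : 1 / r ≠ 1 := fun h => hr1 (by field_simp at h; linarith)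
    have hne : (1 / r) * (1 - 1 / r) ≠ 0 :=
      mul_ne_zero (one_div_ne_zero hr.ne') (sub_ne_zero.mpr (Ne.symm h1r))
    rw [eq_div_iff hne]
    field_simp
    try ring
  rw [hip, hiq, hcoef p hp0 hp1' _, hcoef q hq0 hq1' _]
  exact key_st ha hb (s := 1 / p) (t := 1 / q)
    (one_div_le_one_div_of_le hp0 hp2)
    (le_of_lt (one_div_lt_one_div_of_lt hq0 hqp))
    (fun h => hp1 (by field_simp at h; linarith))
    (fun h => hq1 (by field_simp at h; linarith))


section PartB

variable [Fintype Ω] [DecidableEq Ω]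

/-- Dirac function at `y`. -/
def dirac (y : Ω) : Ω → ℝ := fun x => if x = y then 1 else 0

lemma apply_eq_sum (L : (Ω → ℝ) →ₗ[ℝ] (Ω → ℝ)) (h : Ω → ℝ) (x : Ω) :
    L h x = ∑ y, h y * L (dirac y) x := by
  have h1 : h = ∑ y, h y • dirac y := by
    funext z
    rw [Finset.sum_apply]
    simp [dirac, Finset.sum_ite_eq']
  calc L h x = L (∑ y, h y • dirac y) x := by rw [← h1]
    _ = (∑ y, L (h y • dirac y)) x := by rw [map_sum]
    _ = ∑ y, L (h y • dirac y) x := by rw [Finset.sum_apply]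
    _ = ∑ y, h y * L (dirac y) x := by
        refine Finset.sum_congr rfl fun y _ => ?_
        rw [map_smul]
        simp

lemma pexp_dirac (μ : Ω → ℝ) (x : Ω) (Z : Ω → ℝ) :
    pexp μ (fun ω => dirac x ω * Z ω) = μ x * Z x := by
  unfold pexp dirac
  simp [ite_mul, mul_ite, Finset.sum_ite_eq']

lemma M_symm (μ : Ω → ℝ) (L : (Ω → ℝ) →ₗ[ℝ] (Ω → ℝ)) (hL : IsGen μ L) (x y : Ω) :
    μ x * L (dirac y) x = μ y * L (dirac x) y := by
  have h := hL.2.1 (dirac x) (dirac y)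
  rwa [pexp_dirac μ x (L (dirac y)), pexp_dirac μ y (L (dirac x))] at h

lemma M_rowsum (μ : Ω → ℝ) (L : (Ω → ℝ) →ₗ[ℝ] (Ω → ℝ)) (hL : IsGen μ L) (x : Ω) :
    ∑ y, L (dirac y) x = 0 := by
  have h1 : (∑ y, dirac y : Ω → ℝ) = fun _ => 1 := by
    funext z
    rw [Finset.sum_apply]
    simp [dirac, Finset.sum_ite_eq']
  calc ∑ y, L (dirac y) x = (∑ y, L (dirac y)) x := by rw [Finset.sum_apply]
    _ = L (∑ y, dirac y) x := by rw [map_sum]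
    _ = L (fun _ => 1) x := by rw [h1]
    _ = 0 := by rw [hL.1]; rfl

lemma M_offdiag (μ : Ω → ℝ) (L : (Ω → ℝ) →ₗ[ℝ] (Ω → ℝ)) (hL : IsGen μ L)
    {x y : Ω} (hxy : x ≠ y) : L (dirac y) x ≤ 0 := by
  have h0 : dirac y x = 0 := if_neg hxy
  have hmax : ∀ z, (-(dirac y)) z ≤ (-(dirac y)) x := by
    intro z
    simp only [Pi.neg_apply, h0, neg_zero, dirac]
    split <;> norm_num
  have h := hL.2.2.2 (-(dirac y)) x hmax
  rw [map_neg] at h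
  simpa using h

lemma dform_expand (μ : Ω → ℝ) (L : (Ω → ℝ) →ₗ[ℝ] (Ω → ℝ)) (f h : Ω → ℝ) :
    dform μ L f h = ∑ x, ∑ y, (μ x * L (dirac y) x) * (f x * h y) := by
  unfold dform pexp
  refine Finset.sum_congr rfl fun x _ => ?_
  beta_reduce
  rw [apply_eq_sum L h x, Finset.mul_sum, Finset.mul_sum]
  exact Finset.sum_congr rfl fun y _ => by ring

lemma dform_eq (μ : Ω → ℝ) (L : (Ω → ℝ) →ₗ[ℝ] (Ω → ℝ)) (hL : IsGen μ L) (F G : Ω → ℝ) :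
    dform μ L F G =
      -(1/2) * ∑ x, ∑ y, (μ x * L (dirac y) x) * ((F x - F y) * (G x - G y)) := by
  have Mrow : ∀ x : Ω, ∑ y, μ x * L (dirac y) x = 0 := by
    intro x
    rw [← Finset.mul_sum, M_rowsum μ L hL x, mul_zero]
  have Mcol : ∀ y : Ω, ∑ x, μ x * L (dirac y) x = 0 := by
    intro y
    calc ∑ x, μ x * L (dirac y) x = ∑ x, μ y * L (dirac x) y :=
          Finset.sum_congr rfl fun x _ => M_symm μ L hL x y
      _ = 0 := Mrow y
  have e1 : ∑ x : Ω, ∑ y : Ω, (μ x * L (dirac y) x) * (F x * G x) = 0 := by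
    refine Finset.sum_eq_zero fun x _ => ?_
    rw [← Finset.sum_mul, Mrow x, zero_mul]
  have e4 : ∑ x : Ω, ∑ y : Ω, (μ x * L (dirac y) x) * (F y * G y) = 0 := by
    rw [Finset.sum_comm]
    refine Finset.sum_eq_zero fun y _ => ?_
    rw [← Finset.sum_mul, Mcol y, zero_mul]
  have e3 : ∑ x : Ω, ∑ y : Ω, (μ x * L (dirac y) x) * (F y * G x)
      = ∑ x : Ω, ∑ y : Ω, (μ x * L (dirac y) x) * (F x * G y) := by
    rw [Finset.sum_comm]
    refine Finset.sum_congr rfl fun a _ => Finset.sum_congr rfl fun b _ => ?_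
    rw [M_symm μ L hL b a]
  have split : ∑ x : Ω, ∑ y : Ω, (μ x * L (dirac y) x) * ((F x - F y) * (G x - G y))
      = ∑ x : Ω, ∑ y : Ω, ((μ x * L (dirac y) x) * (F x * G x)
          - (μ x * L (dirac y) x) * (F x * G y)
          - (μ x * L (dirac y) x) * (F y * G x)
          + (μ x * L (dirac y) x) * (F y * G y)) :=
    Finset.sum_congr rfl fun x _ => Finset.sum_congr rfl fun y _ => by ring
  rw [dform_expand μ L F G, split]
  simp only [Finset.sum_add_distrib, Finset.sum_sub_distrib]
  rw [e1, e4, e3]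
  ring

end PartB

end SVAux

/-- extended Stroock–Varopoulos inequality. -/
theorem stroock_varopoulos [Fintype Ω] (μ : Ω → ℝ)
    (hμpos : ∀ ω, 0 < μ ω) (hμ1 : ∑ ω, μ ω = 1)
    (L : (Ω → ℝ) →ₗ[ℝ] (Ω → ℝ)) (hL : IsGen μ L)
    (p q : ℝ) (hq0 : 0 < q) (hp2 : p ≤ 2) (hq1 : q ≠ 1) (hp1 : p ≠ 1) (hqp : q < p)
    (g : Ω → ℝ) (hg : ∀ ω, 0 < g ω) :
    p * (p / (p - 1)) *
        dform μ L (fun ω => g ω ^ (1 / p)) (fun ω => g ω ^ (1 / (p / (p - 1)))) ≤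
      q * (q / (q - 1)) *
        dform μ L (fun ω => g ω ^ (1 / q)) (fun ω => g ω ^ (1 / (q / (q - 1)))) := by
  classical
  have hp0 : 0 < p := hq0.trans hqp
  rw [SVAux.dform_eq μ L hL, SVAux.dform_eq μ L hL]
  have hS : q * (q / (q - 1)) *
        (∑ x, ∑ y, (μ x * L (SVAux.dirac y) x) *
          (((fun ω => g ω ^ (1 / q)) x - (fun ω => g ω ^ (1 / q)) y) *
           ((fun ω => g ω ^ (1 / (q / (q - 1)))) x - (fun ω => g ω ^ (1 / (q / (q - 1)))) y))) ≤
      p * (p / (p - 1)) *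
        (∑ x, ∑ y, (μ x * L (SVAux.dirac y) x) *
          (((fun ω => g ω ^ (1 / p)) x - (fun ω => g ω ^ (1 / p)) y) *
           ((fun ω => g ω ^ (1 / (p / (p - 1)))) x - (fun ω => g ω ^ (1 / (p / (p - 1)))) y))) := by
    simp only [Finset.mul_sum]
    refine Finset.sum_le_sum fun x _ => Finset.sum_le_sum fun y _ => ?_
    beta_reduce
    by_cases hxy : x = y
    · subst hxy
      simp
    · have hm : μ x * L (SVAux.dirac y) x ≤ 0 :=
        mul_nonpos_of_nonneg_of_nonpos (hμpos x).le (SVAux.M_offdiag μ L hL hxy)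
      have hkey := SVAux.key_pq (hg x) (hg y) hq0 hp2 hq1 hp1 hqp
      nlinarith [mul_nonpos_of_nonpos_of_nonneg hm (sub_nonneg.mpr hkey)]
  nlinarith [hS]


end
end

section
/- Let I be a non-empty convex subset of ℝ and let φ₁, φ₂, ψ₁, ψ₂ : I → ℝ satisfy (φ₁(a)−φ₁(b))(φ₂(a)−φ₂(b)) ≤ (ψ₁(a)−ψ₁(b))(ψ₂(a)−ψ₂(b)) for all a, b ∈ I. Then for every f : Ω → I one has 𝓔(φ₁∘f, φ₂∘f) ≤ 𝓔(ψ₁∘f, ψ₂∘f). -/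
open Real Finset

noncomputable section

variable {Ω : Type*}

/-- comparison lemma for Dirichlet forms. -/
theorem dform_comparison [Fintype Ω] (μ : Ω → ℝ)
    (hμpos : ∀ ω, 0 < μ ω) (hμ1 : ∑ ω, μ ω = 1)
    (L : (Ω → ℝ) →ₗ[ℝ] (Ω → ℝ)) (hL : IsGen μ L)
    (I : Set ℝ) (hIconv : Convex ℝ I) (hIne : I.Nonempty)
    (φ₁ φ₂ ψ₁ ψ₂ : ℝ → ℝ)
    (hcmp : ∀ a ∈ I, ∀ b ∈ I,
      (φ₁ a - φ₁ b) * (φ₂ a - φ₂ b) ≤ (ψ₁ a - ψ₁ b) * (ψ₂ a - ψ₂ b))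
    (f : Ω → ℝ) (hf : ∀ ω, f ω ∈ I) :
    dform μ L (fun ω => φ₁ (f ω)) (fun ω => φ₂ (f ω)) ≤
      dform μ L (fun ω => ψ₁ (f ω)) (fun ω => ψ₂ (f ω)) := by
  classical
  obtain ⟨hL1, hLsym, _hLpsd, hLmax⟩ := hL
  set K : Ω → Ω → ℝ := fun a b => L (fun ω => if ω = b then 1 else 0) a with hKdef
  have hrep : ∀ (g : Ω → ℝ) (a : Ω), L g a = ∑ b, g b * K a b := by
    intro g a
    have hg : g = ∑ b : Ω, g b • (fun ω => if ω = b then (1:ℝ) else 0) := by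
      funext ω
      simp [Finset.sum_apply, Finset.sum_ite_eq]
    conv_lhs => rw [hg]
    rw [map_sum]
    simp [Finset.sum_apply, hKdef, smul_eq_mul]
  have hrow : ∀ a, ∑ b, K a b = 0 := by
    intro a
    have := hrep (fun _ => 1) a
    rw [hL1] at this
    simpa using this.symm
  have hsym : ∀ a b, μ a * K a b = μ b * K b a := by
    intro a b
    have h := hLsym (fun ω => if ω = a then 1 else 0) (fun ω => if ω = b then 1 else 0)
    simp only [pexp, mul_ite, mul_one, mul_zero, ite_mul, zero_mul] at h
    rw [Finset.sum_ite_eq' Finset.univ a, Finset.sum_ite_eq' Finset.univ b] at h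
    simpa [hKdef] using h
  have hoff : ∀ a b, a ≠ b → K a b ≤ 0 := by
    intro a b hab
    have hne : (fun ω => if ω = b then (-1:ℝ) else 0)
        = (-1 : ℝ) • (fun ω => if ω = b then (1:ℝ) else 0) := by
      funext ω; by_cases h : ω = b <;> simp [h]
    have hmax : ∀ x, (if x = b then (-1:ℝ) else 0) ≤ (if a = b then (-1:ℝ) else 0) := by
      intro x
      simp only [if_neg hab]
      by_cases h : x = b <;> simp [h]
    have h0 := hLmax (fun ω => if ω = b then (-1:ℝ) else 0) a hmax
    rw [hne, map_smul] at h0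
    simp only [Pi.smul_apply, smul_eq_mul, neg_one_mul] at h0
    have : 0 ≤ -(K a b) := by simpa [hKdef] using h0
    linarith
  -- the key representation of the Dirichlet form
  have key : ∀ g h : Ω → ℝ, dform μ L g h
      = ∑ a, ∑ b, (-(1/2)) * (μ a * K a b) * ((g b - g a) * (h b - h a)) := by
    intro g h
    have hA : dform μ L g h = ∑ a, ∑ b, μ a * K a b * g a * (h b - h a) := by
      unfold dform pexp
      refine Finset.sum_congr rfl fun a _ => ?_
      simp only []
      rw [hrep h a, Finset.mul_sum, Finset.mul_sum]
      have hz : ∑ b, μ a * K a b * g a * h a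
          = (μ a * g a * h a) * ∑ b, K a b := by
        rw [Finset.mul_sum]; exact Finset.sum_congr rfl fun b _ => by ring
      have : ∑ b, μ a * K a b * g a * (h b - h a)
          = (∑ b, μ a * K a b * g a * h b) - ∑ b, μ a * K a b * g a * h a := by
        rw [← Finset.sum_sub_distrib]
        exact Finset.sum_congr rfl fun b _ => by ring
      rw [this, hz, hrow a, mul_zero, sub_zero]
      exact Finset.sum_congr rfl fun b _ => by ring
    have hB : (∑ a, ∑ b, μ a * K a b * g a * (h b - h a))
        = ∑ a, ∑ b, μ a * K a b * g b * (h a - h b) := by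
      rw [Finset.sum_comm]
      refine Finset.sum_congr rfl fun b _ => Finset.sum_congr rfl fun a _ => ?_
      have : μ a * K a b * g a * (h b - h a)
          = (μ a * K a b) * (g a * (h b - h a)) := by ring
      rw [this, hsym a b]; ring
    have h2 : dform μ L g h + dform μ L g h
        = ∑ a, ∑ b, ((μ a * K a b * g a * (h b - h a)) + (μ a * K a b * g b * (h a - h b))) := by
      nth_rewrite 2 [hA.trans hB]
      nth_rewrite 1 [hA]
      rw [← Finset.sum_add_distrib]
      exact Finset.sum_congr rfl fun a _ => (Finset.sum_add_distrib).symm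
    have h3 : ∑ a, ∑ b, ((μ a * K a b * g a * (h b - h a)) + (μ a * K a b * g b * (h a - h b)))
        = ∑ a, ∑ b, 2 * ((-(1/2)) * (μ a * K a b) * ((g b - g a) * (h b - h a))) := by
      refine Finset.sum_congr rfl fun a _ => Finset.sum_congr rfl fun b _ => by ring
    have h4 : dform μ L g h + dform μ L g h
        = 2 * ∑ a, ∑ b, (-(1/2)) * (μ a * K a b) * ((g b - g a) * (h b - h a)) := by
      rw [h2, h3, Finset.mul_sum]
      exact Finset.sum_congr rfl fun a _ => (Finset.mul_sum _ _ _).symm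
    linarith
  rw [key, key]
  refine Finset.sum_le_sum fun a _ => Finset.sum_le_sum fun b _ => ?_
  by_cases hab : a = b
  · subst hab; simp
  · have hc : 0 ≤ -(1/2) * (μ a * K a b) := by
      have h1 := hoff a b hab
      have h2 := (hμpos a).le
      nlinarith
    exact mul_le_mul_of_nonneg_left (hcmp (f b) (hf b) (f a) (hf a)) hc

end
end

section
/- Let I be a non-empty convex subset of ℝ and let φ₁, φ₂, ψ₁, ψ₂ : I → ℝ be differentiable functions such that φ₁'(a)φ₂'(b) + φ₁'(b)φ₂'(a) ≤ ψ₁'(a)ψ₂'(b) + ψ₁'(b)ψ₂'(a) for all a, b ∈ I. Then for every f : Ω → I one has 𝓔(φ₁∘f, φ₂∘f) ≤ 𝓔(ψ₁∘f, ψ₂∘f). -/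
open Real Finset

noncomputable section

variable {Ω : Type*}

/-- Auxiliary pointwise comparison, ordered case. -/
private lemma key_pointwise_le {I : Set ℝ} (hIconv : Convex ℝ I)
    {φ₁ φ₂ ψ₁ ψ₂ dφ₁ dφ₂ dψ₁ dψ₂ : ℝ → ℝ}
    (hφ₁ : ∀ a ∈ I, HasDerivWithinAt φ₁ (dφ₁ a) I a)
    (hφ₂ : ∀ a ∈ I, HasDerivWithinAt φ₂ (dφ₂ a) I a)
    (hψ₁ : ∀ a ∈ I, HasDerivWithinAt ψ₁ (dψ₁ a) I a)
    (hψ₂ : ∀ a ∈ I, HasDerivWithinAt ψ₂ (dψ₂ a) I a)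
    (hcmp : ∀ a ∈ I, ∀ b ∈ I,
      dφ₁ a * dφ₂ b + dφ₁ b * dφ₂ a ≤ dψ₁ a * dψ₂ b + dψ₁ b * dψ₂ a)
    {a b : ℝ} (ha : a ∈ I) (hb : b ∈ I) (hba : b ≤ a) :
    (φ₁ a - φ₁ b) * (φ₂ a - φ₂ b) ≤ (ψ₁ a - ψ₁ b) * (ψ₂ a - ψ₂ b) := by
  set H : ℝ → ℝ → ℝ := fun x t =>
    dψ₁ x * (ψ₂ x - ψ₂ t) + dψ₂ x * (ψ₁ x - ψ₁ t)
      - dφ₁ x * (φ₂ x - φ₂ t) - dφ₂ x * (φ₁ x - φ₁ t) with hHdef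
  -- Step 1: for fixed x ∈ I, H x is antitone on I
  have hHder : ∀ x, ∀ t ∈ I, HasDerivWithinAt (H x)
      (dψ₁ x * -dψ₂ t + dψ₂ x * -dψ₁ t - dφ₁ x * -dφ₂ t - dφ₂ x * -dφ₁ t) I t := by
    intro x t ht
    have h1 := ((hψ₂ t ht).const_sub (ψ₂ x)).const_mul (dψ₁ x)
    have h2 := ((hψ₁ t ht).const_sub (ψ₁ x)).const_mul (dψ₂ x)
    have h3 := ((hφ₂ t ht).const_sub (φ₂ x)).const_mul (dφ₁ x)
    have h4 := ((hφ₁ t ht).const_sub (φ₁ x)).const_mul (dφ₂ x)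
    exact ((h1.add h2).sub h3).sub h4
  have hstep1 : ∀ x ∈ I, AntitoneOn (H x) I := by
    intro x hx
    apply antitoneOn_of_hasDerivWithinAt_nonpos hIconv
      (f' := fun t => dψ₁ x * -dψ₂ t + dψ₂ x * -dψ₁ t - dφ₁ x * -dφ₂ t - dφ₂ x * -dφ₁ t)
    · exact fun t ht => (hHder x t ht).continuousWithinAt
    · exact fun t ht => (hHder x t (interior_subset ht)).mono interior_subset
    · intro t ht
      have h := hcmp x hx t (interior_subset ht)
      nlinarith [h]
  -- Step 2: G is monotone on I ∩ [b, ∞)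
  set G : ℝ → ℝ := fun x =>
    (ψ₁ x - ψ₁ b) * (ψ₂ x - ψ₂ b) - (φ₁ x - φ₁ b) * (φ₂ x - φ₂ b) with hGdef
  set S : Set ℝ := I ∩ Set.Ici b with hSdef
  have hSsub : S ⊆ I := Set.inter_subset_left
  have hGder : ∀ x ∈ I, HasDerivWithinAt G
      (dψ₁ x * (ψ₂ x - ψ₂ b) + (ψ₁ x - ψ₁ b) * dψ₂ x -
        (dφ₁ x * (φ₂ x - φ₂ b) + (φ₁ x - φ₁ b) * dφ₂ x)) I x := by
    intro x hx
    have h1 := ((hψ₁ x hx).sub_const (ψ₁ b)).mul ((hψ₂ x hx).sub_const (ψ₂ b))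
    have h2 := ((hφ₁ x hx).sub_const (φ₁ b)).mul ((hφ₂ x hx).sub_const (φ₂ b))
    exact h1.sub h2
  have hmono : MonotoneOn G S := by
    apply monotoneOn_of_hasDerivWithinAt_nonneg (hIconv.inter (convex_Ici b))
      (f' := fun x => dψ₁ x * (ψ₂ x - ψ₂ b) + (ψ₁ x - ψ₁ b) * dψ₂ x -
        (dφ₁ x * (φ₂ x - φ₂ b) + (φ₁ x - φ₁ b) * dφ₂ x))
    · exact fun x hx => ((hGder x (hSsub hx)).continuousWithinAt).mono hSsub
    · exact fun x hx =>
        (hGder x (hSsub (interior_subset hx))).mono (interior_subset.trans hSsub)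
    · intro x hx
      have hxS : x ∈ S := interior_subset hx
      have hxI : x ∈ I := hxS.1
      have hbx : b ≤ x := hxS.2
      have h1 : H x x ≤ H x b := (hstep1 x hxI) hb hxI hbx
      have h2 : H x x = 0 := by simp [hHdef]
      have h3 : H x b = dψ₁ x * (ψ₂ x - ψ₂ b) + (ψ₁ x - ψ₁ b) * dψ₂ x -
          (dφ₁ x * (φ₂ x - φ₂ b) + (φ₁ x - φ₁ b) * dφ₂ x) := by
        simp only [hHdef]; ring
      linarith
  have hbS : b ∈ S := ⟨hb, le_refl b⟩
  have haS : a ∈ S := ⟨ha, hba⟩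
  have := hmono hbS haS hba
  have hGb : G b = 0 := by simp [hGdef]
  simp only [hGdef] at this
  linarith

/-- differential comparison lemma for Dirichlet forms. -/
theorem dform_comparison_deriv [Fintype Ω] (μ : Ω → ℝ)
    (hμpos : ∀ ω, 0 < μ ω) (hμ1 : ∑ ω, μ ω = 1)
    (L : (Ω → ℝ) →ₗ[ℝ] (Ω → ℝ)) (hL : IsGen μ L)
    (I : Set ℝ) (hIconv : Convex ℝ I) (hIne : I.Nonempty)
    (φ₁ φ₂ ψ₁ ψ₂ dφ₁ dφ₂ dψ₁ dψ₂ : ℝ → ℝ)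
    (hφ₁ : ∀ a ∈ I, HasDerivWithinAt φ₁ (dφ₁ a) I a)
    (hφ₂ : ∀ a ∈ I, HasDerivWithinAt φ₂ (dφ₂ a) I a)
    (hψ₁ : ∀ a ∈ I, HasDerivWithinAt ψ₁ (dψ₁ a) I a)
    (hψ₂ : ∀ a ∈ I, HasDerivWithinAt ψ₂ (dψ₂ a) I a)
    (hcmp : ∀ a ∈ I, ∀ b ∈ I,
      dφ₁ a * dφ₂ b + dφ₁ b * dφ₂ a ≤ dψ₁ a * dψ₂ b + dψ₁ b * dψ₂ a)
    (f : Ω → ℝ) (hf : ∀ ω, f ω ∈ I) :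
    dform μ L (fun ω => φ₁ (f ω)) (fun ω => φ₂ (f ω)) ≤
      dform μ L (fun ω => ψ₁ (f ω)) (fun ω => ψ₂ (f ω)) := by
  classical
  -- pointwise comparison of products of increments
  have hpt : ∀ a ∈ I, ∀ b ∈ I,
      (φ₁ a - φ₁ b) * (φ₂ a - φ₂ b) ≤ (ψ₁ a - ψ₁ b) * (ψ₂ a - ψ₂ b) := by
    intro a ha b hb
    rcases le_total b a with hba | hab
    · exact key_pointwise_le hIconv hφ₁ hφ₂ hψ₁ hψ₂ hcmp ha hb hba
    · have h := key_pointwise_le hIconv hφ₁ hφ₂ hψ₁ hψ₂ hcmp hb ha hab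
      have e1 : (φ₁ a - φ₁ b) * (φ₂ a - φ₂ b) = (φ₁ b - φ₁ a) * (φ₂ b - φ₂ a) := by ring
      have e2 : (ψ₁ a - ψ₁ b) * (ψ₂ a - ψ₂ b) = (ψ₁ b - ψ₁ a) * (ψ₂ b - ψ₂ a) := by ring
      rw [e1, e2]; exact h
  -- the kernel matrix of L
  set e : Ω → Ω → ℝ := fun y z => if z = y then 1 else 0 with hedef
  set A : Ω → Ω → ℝ := fun x y => μ x * L (e y) x with hAdef
  have hone : (∑ y, e y) = fun _ => (1 : ℝ) := by
    funext z
    simp [hedef, Finset.sum_apply]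
  have hLsum : ∀ g : Ω → ℝ, L g = fun x => ∑ y, g y * L (e y) x := by
    intro g
    have hg : g = ∑ y, g y • e y := by
      funext z
      simp [hedef, Finset.sum_apply]
    conv_lhs => rw [hg]
    rw [map_sum]
    funext x
    simp [Finset.sum_apply]
  have hdform : ∀ u v : Ω → ℝ,
      dform μ L u v = ∑ x, ∑ y, A x y * u x * v y := by
    intro u v
    rw [dform, pexp]
    refine Finset.sum_congr rfl fun x _ => ?_
    rw [hLsum v]
    simp only [hAdef]
    rw [Finset.mul_sum, Finset.mul_sum]
    exact Finset.sum_congr rfl fun y _ => by ring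
  have hApexp : ∀ x y, pexp μ (fun ω => e x ω * L (e y) ω) = A x y := by
    intro x y
    rw [pexp]
    rw [Finset.sum_eq_single x (fun z _ hz => by simp [hedef, hz])
      (fun h => absurd (Finset.mem_univ x) h)]
    simp [hedef, hAdef]
  have hAsymm : ∀ x y, A x y = A y x := by
    intro x y
    rw [← hApexp x y, ← hApexp y x, hL.2.1]
  have hrow : ∀ x, ∑ y, A x y = 0 := by
    intro x
    simp only [hAdef]
    rw [← Finset.mul_sum]
    have : (∑ y, L (e y) x) = L (fun _ => 1) x := by
      rw [← hone, map_sum, Finset.sum_apply]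
    rw [this, hL.1]
    simp
  have hAoff : ∀ x y, x ≠ y → A x y ≤ 0 := by
    intro x y hxy
    have hmax : ∀ z, (fun z => -(e y z)) z ≤ (fun z => -(e y z)) x := by
      intro z
      simp only [hedef]
      rw [if_neg hxy]
      by_cases h : z = y <;> simp [h]
    have h0 := hL.2.2.2 (fun z => -(e y z)) x hmax
    have hneg : (fun z => -(e y z)) = -(e y) := rfl
    rw [hneg, map_neg] at h0
    have : L (e y) x ≤ 0 := by
      have := h0
      simp only [Pi.neg_apply] at this
      linarith
    exact mul_nonpos_of_nonneg_of_nonpos (hμpos x).le this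
  -- quadratic-form representation of the Dirichlet form
  have hquad : ∀ u v : Ω → ℝ,
      ∑ x, ∑ y, A x y * (u x - u y) * (v x - v y)
        = -2 * ∑ x, ∑ y, A x y * u x * v y := by
    intro u v
    have hexp : ∀ x y : Ω, A x y * (u x - u y) * (v x - v y)
        = A x y * u x * v x - A x y * u x * v y - A x y * u y * v x
          + A x y * u y * v y := fun x y => by ring
    have h1 : ∑ x, ∑ y, A x y * u x * v x = 0 := by
      refine Finset.sum_eq_zero fun x _ => ?_
      have : ∑ y, A x y * u x * v x = (∑ y, A x y) * (u x * v x) := by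
        rw [Finset.sum_mul]
        exact Finset.sum_congr rfl fun y _ => by ring
      rw [this, hrow]; ring
    have h4 : ∑ x, ∑ y, A x y * u y * v y = 0 := by
      rw [Finset.sum_comm]
      refine Finset.sum_eq_zero fun y _ => ?_
      have : ∑ x, A x y * u y * v y = (∑ x, A y x) * (u y * v y) := by
        rw [Finset.sum_mul]
        exact Finset.sum_congr rfl fun x _ => by rw [hAsymm x y]; try ring
      rw [this, hrow]; ring
    have h3 : ∑ x, ∑ y, A x y * u y * v x = ∑ x, ∑ y, A x y * u x * v y := by
      rw [Finset.sum_comm]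
      exact Finset.sum_congr rfl fun y _ =>
        Finset.sum_congr rfl fun x _ => by rw [hAsymm x y]; try ring
    calc ∑ x, ∑ y, A x y * (u x - u y) * (v x - v y)
        = ∑ x, ∑ y, (A x y * u x * v x - A x y * u x * v y - A x y * u y * v x
            + A x y * u y * v y) :=
          Finset.sum_congr rfl fun x _ => Finset.sum_congr rfl fun y _ => hexp x y
      _ = (∑ x, ∑ y, A x y * u x * v x) - (∑ x, ∑ y, A x y * u x * v y)
            - (∑ x, ∑ y, A x y * u y * v x) + (∑ x, ∑ y, A x y * u y * v y) := by
          simp [Finset.sum_sub_distrib, Finset.sum_add_distrib]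
      _ = -2 * ∑ x, ∑ y, A x y * u x * v y := by rw [h1, h3, h4]; ring
  -- conclude
  set Φ₁ : Ω → ℝ := fun ω => φ₁ (f ω)
  set Φ₂ : Ω → ℝ := fun ω => φ₂ (f ω)
  set Ψ₁ : Ω → ℝ := fun ω => ψ₁ (f ω)
  set Ψ₂ : Ω → ℝ := fun ω => ψ₂ (f ω)
  have hkey : 0 ≤ ∑ x, ∑ y, A x y *
      ((Φ₁ x - Φ₁ y) * (Φ₂ x - Φ₂ y) - (Ψ₁ x - Ψ₁ y) * (Ψ₂ x - Ψ₂ y)) := by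
    refine Finset.sum_nonneg fun x _ => Finset.sum_nonneg fun y _ => ?_
    by_cases hxy : x = y
    · subst hxy; simp
    · have hA := hAoff x y hxy
      have hD : (Φ₁ x - Φ₁ y) * (Φ₂ x - Φ₂ y) - (Ψ₁ x - Ψ₁ y) * (Ψ₂ x - Ψ₂ y) ≤ 0 := by
        have := hpt (f x) (hf x) (f y) (hf y)
        simp only [Φ₁, Φ₂, Ψ₁, Ψ₂]
        linarith
      nlinarith [hA, hD]
  have hΦ := hquad Φ₁ Φ₂
  have hΨ := hquad Ψ₁ Ψ₂
  have hsplit : ∑ x, ∑ y, A x y *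
      ((Φ₁ x - Φ₁ y) * (Φ₂ x - Φ₂ y) - (Ψ₁ x - Ψ₁ y) * (Ψ₂ x - Ψ₂ y))
      = (∑ x, ∑ y, A x y * (Φ₁ x - Φ₁ y) * (Φ₂ x - Φ₂ y))
        - ∑ x, ∑ y, A x y * (Ψ₁ x - Ψ₁ y) * (Ψ₂ x - Ψ₂ y) := by
    rw [← Finset.sum_sub_distrib]
    refine Finset.sum_congr rfl fun x _ => ?_
    rw [← Finset.sum_sub_distrib]
    exact Finset.sum_congr rfl fun y _ => by ring
  rw [hdform Φ₁ Φ₂, hdform Ψ₁ Ψ₂]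
  rw [hsplit, hΦ, hΨ] at hkey
  linarith

end
end

section
/- For every f : Ω → (0,∞) one has 𝓔(log f, log f) ≤ −𝓔(f, 1/f). -/
open Real Finset

noncomputable section

variable {Ω : Type*}

lemma two_log_le {y : ℝ} (hy : 1 ≤ y) : 2 * Real.log y ≤ y - y⁻¹ := by
  have hsub : Set.Ici (1:ℝ) ⊆ {0}ᶜ := fun z hz => by
    simp only [Set.mem_compl_iff, Set.mem_singleton_iff]
    have : (1:ℝ) ≤ z := hz
    linarith
  have hderiv : ∀ x ∈ Set.Ioi (1:ℝ),
      HasDerivAt (fun z : ℝ => z - z⁻¹ - 2 * Real.log z) (1 - (-(x^2)⁻¹) - 2 * x⁻¹) x := by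
    intro x hx
    have hx0 : x ≠ 0 := (lt_trans one_pos hx).ne'
    exact ((hasDerivAt_id x).sub (hasDerivAt_inv hx0)).sub
      ((Real.hasDerivAt_log hx0).const_mul 2)
  have mono : MonotoneOn (fun z : ℝ => z - z⁻¹ - 2 * Real.log z) (Set.Ici 1) := by
    apply monotoneOn_of_deriv_nonneg (convex_Ici 1)
    · exact (continuousOn_id.sub (continuousOn_inv₀.mono hsub)).sub
        (continuousOn_const.mul (Real.continuousOn_log.mono hsub))
    · rw [interior_Ici]
      intro x hx
      exact (hderiv x hx).differentiableAt.differentiableWithinAt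
    · rw [interior_Ici]
      intro x hx
      rw [(hderiv x hx).deriv]
      have hx0 : (0:ℝ) < x := lt_trans one_pos hx
      have h1 : (x^2)⁻¹ = (x⁻¹)^2 := by rw [inv_pow]
      have h2 : x * x⁻¹ = 1 := mul_inv_cancel₀ hx0.ne'
      rw [h1]
      nlinarith [sq_nonneg (1 - x⁻¹)]
  have := mono (Set.self_mem_Ici) (Set.mem_Ici.mpr hy) hy
  simp only [Real.log_one, inv_one] at this
  linarith

lemma log_sq_le {u v : ℝ} (hu : 0 < u) (hv : 0 < v) :
    (Real.log u - Real.log v)^2 ≤ (u - v) * (v⁻¹ - u⁻¹) := by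
  have key : ∀ a b : ℝ, 0 < b → b ≤ a →
      (Real.log a - Real.log b)^2 ≤ (a - b) * (b⁻¹ - a⁻¹) := by
    intro a b hb hba
    have ha : 0 < a := lt_of_lt_of_le hb hba
    set y := Real.sqrt (a / b) with hy_def
    have hdivpos : 0 < a / b := div_pos ha hb
    have hy0 : 0 < y := Real.sqrt_pos.mpr hdivpos
    have hy1 : 1 ≤ y := by
      rw [hy_def]
      rw [show (1:ℝ) = Real.sqrt 1 by simp]
      exact Real.sqrt_le_sqrt ((one_le_div hb).mpr hba)
    have hysq : y^2 = a / b := Real.sq_sqrt hdivpos.le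
    have ha_eq : a = y^2 * b := by
      rw [hysq]; field_simp
    have hlog : Real.log a - Real.log b = 2 * Real.log y := by
      rw [← Real.log_div ha.ne' hb.ne', ← hysq, Real.log_pow]
      push_cast; ring
    have hrhs : (a - b) * (b⁻¹ - a⁻¹) = (y - y⁻¹)^2 := by
      rw [ha_eq]
      field_simp
    rw [hlog, hrhs]
    have h1 : 0 ≤ 2 * Real.log y := by
      have := Real.log_nonneg hy1
      linarith
    have h2 : 2 * Real.log y ≤ y - y⁻¹ := two_log_le hy1
    exact pow_le_pow_left₀ h1 h2 2
  rcases le_total v u with h | h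
  · exact key u v hv h
  · have := key v u hu h
    calc (Real.log u - Real.log v)^2 = (Real.log v - Real.log u)^2 := by ring
    _ ≤ (v - u) * (u⁻¹ - v⁻¹) := this
    _ = (u - v) * (v⁻¹ - u⁻¹) := by ring


/-- `𝓔(log f, log f) ≤ −𝓔(f, 1/f)`. -/
theorem dform_log_le [Fintype Ω] (μ : Ω → ℝ)
    (hμpos : ∀ ω, 0 < μ ω) (hμ1 : ∑ ω, μ ω = 1)
    (L : (Ω → ℝ) →ₗ[ℝ] (Ω → ℝ)) (hL : IsGen μ L)
    (f : Ω → ℝ) (hf : ∀ ω, 0 < f ω) :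
    dform μ L (fun ω => Real.log (f ω)) (fun ω => Real.log (f ω)) ≤
      -dform μ L f (fun ω => (f ω)⁻¹) := by
  classical
  obtain ⟨hL1, hLsym, _, hLmax⟩ := hL
  -- basis functions
  set e : Ω → Ω → ℝ := fun x => fun y => if y = x then 1 else 0 with he
  set c : Ω → Ω → ℝ := fun ω x => L (e x) ω with hc
  -- representation of L
  have hrep : ∀ (g : Ω → ℝ) (ω : Ω), L g ω = ∑ x, c ω x * g x := by
    intro g ω
    have hg : g = ∑ x : Ω, g x • e x := by
      funext y
      simp only [Finset.sum_apply, Pi.smul_apply, he, smul_eq_mul, mul_ite, mul_one, mul_zero]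
      simp
    conv_lhs => rw [hg]
    rw [map_sum]
    simp only [map_smul, Finset.sum_apply, Pi.smul_apply, smul_eq_mul]
    exact Finset.sum_congr rfl fun x _ => mul_comm _ _
  -- row sums vanish
  have hrow : ∀ ω, ∑ x, c ω x = 0 := by
    intro ω
    have h1 : (fun _ : Ω => (1:ℝ)) = ∑ x : Ω, e x := by
      funext y
      simp [he]
    have := congrFun hL1 ω
    rw [h1, map_sum] at this
    simpa [Finset.sum_apply, hc] using this
  -- off-diagonal sign
  have hsign : ∀ ω x, ω ≠ x → c ω x ≤ 0 := by
    intro ω x hne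
    have hmax := hLmax (fun y => if y = x then (-1:ℝ) else 0) ω ?_
    · have heq : (fun y => if y = x then (-1:ℝ) else 0) = (-1 : ℝ) • e x := by
        funext y; by_cases h : y = x <;> simp [he, h]
      rw [heq, map_smul] at hmax
      simp only [Pi.smul_apply, smul_eq_mul, neg_mul, one_mul] at hmax
      linarith [hmax]
    · intro y
      simp only [if_neg hne]
      split <;> norm_num
  -- symmetry of q ω x = μ ω * c ω x
  have hq : ∀ ω x, μ ω * c ω x = μ x * c x ω := by
    intro ω x
    have := hLsym (e ω) (e x)
    simp only [pexp, he, hc] at this ⊢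
    rw [Finset.sum_eq_single ω (fun b _ hb => by simp [if_neg hb]) (by simp),
        Finset.sum_eq_single x (fun b _ hb => by simp [if_neg hb]) (by simp)] at this
    simpa using this
  -- dform as double sum
  have hdform : ∀ uu vv : Ω → ℝ,
      dform μ L uu vv = ∑ ω, ∑ x, (μ ω * c ω x) * (uu ω * vv x) := by
    intro uu vv
    simp only [dform, pexp]
    refine Finset.sum_congr rfl fun ω _ => ?_
    rw [hrep vv ω, Finset.mul_sum, Finset.mul_sum]
    exact Finset.sum_congr rfl fun x _ => by ring
  -- key symmetrization: 2 * dform uu vv = -∑∑ q (Δuu)(Δvv)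
  have hsym2 : ∀ uu vv : Ω → ℝ,
      2 * dform μ L uu vv
        = -∑ ω, ∑ x, (μ ω * c ω x) * ((uu ω - uu x) * (vv ω - vv x)) := by
    intro uu vv
    have hdiag : ∀ (w : Ω → ℝ), ∑ ω, ∑ x, (μ ω * c ω x) * w ω = 0 := by
      intro w
      have : ∀ ω, ∑ x, (μ ω * c ω x) * w ω = 0 := by
        intro ω
        rw [← Finset.sum_mul, ← Finset.mul_sum, hrow, mul_zero, zero_mul]
      simp [this]
    have hdiag' : ∀ (w : Ω → ℝ), ∑ ω, ∑ x, (μ ω * c ω x) * w x = 0 := by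
      intro w
      rw [Finset.sum_comm]
      calc ∑ x, ∑ ω, (μ ω * c ω x) * w x
          = ∑ x, ∑ ω, (μ x * c x ω) * w x := by
            exact Finset.sum_congr rfl fun x _ => Finset.sum_congr rfl fun ω _ => by rw [hq]
        _ = 0 := hdiag w
    have hswap : ∑ ω, ∑ x, (μ ω * c ω x) * (uu x * vv ω)
        = ∑ ω, ∑ x, (μ ω * c ω x) * (uu ω * vv x) := by
      rw [Finset.sum_comm]
      exact Finset.sum_congr rfl fun x _ => Finset.sum_congr rfl fun ω _ => by
        rw [hq]
    have expand : ∑ ω, ∑ x, (μ ω * c ω x) * ((uu ω - uu x) * (vv ω - vv x))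
        = (∑ ω, ∑ x, (μ ω * c ω x) * (uu ω * vv ω))
          - (∑ ω, ∑ x, (μ ω * c ω x) * (uu ω * vv x))
          - (∑ ω, ∑ x, (μ ω * c ω x) * (uu x * vv ω))
          + (∑ ω, ∑ x, (μ ω * c ω x) * (uu x * vv x)) := by
      rw [← Finset.sum_sub_distrib, ← Finset.sum_sub_distrib, ← Finset.sum_add_distrib]
      refine Finset.sum_congr rfl fun ω _ => ?_
      rw [← Finset.sum_sub_distrib, ← Finset.sum_sub_distrib, ← Finset.sum_add_distrib]
      exact Finset.sum_congr rfl fun x _ => by ring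
    rw [hdform, expand, hdiag (fun ω => uu ω * vv ω), hdiag' (fun x => uu x * vv x), hswap]
    ring
  -- pointwise comparison
  have hpoint : ∀ ω x : Ω,
      0 ≤ (μ ω * c ω x) * ((Real.log (f ω) - Real.log (f x)) * (Real.log (f ω) - Real.log (f x))
          + (f ω - f x) * ((f ω)⁻¹ - (f x)⁻¹)) := by
    intro ω x
    rcases eq_or_ne ω x with rfl | hne
    · simp
    · have hq0 : μ ω * c ω x ≤ 0 :=
        mul_nonpos_of_nonneg_of_nonpos (hμpos ω).le (hsign ω x hne)
      have hp := log_sq_le (hf ω) (hf x)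
      have hbr : (Real.log (f ω) - Real.log (f x)) * (Real.log (f ω) - Real.log (f x))
          + (f ω - f x) * ((f ω)⁻¹ - (f x)⁻¹) ≤ 0 := by
        nlinarith [hp]
      nlinarith [mul_nonneg (neg_nonneg.mpr hq0) (neg_nonneg.mpr hbr)]
  have hsum : 0 ≤ ∑ ω, ∑ x, (μ ω * c ω x) * ((Real.log (f ω) - Real.log (f x)) * (Real.log (f ω) - Real.log (f x))
          + (f ω - f x) * ((f ω)⁻¹ - (f x)⁻¹)) :=
    Finset.sum_nonneg fun ω _ => Finset.sum_nonneg fun x _ => hpoint ω x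
  have heq : ∑ ω, ∑ x, (μ ω * c ω x) * ((Real.log (f ω) - Real.log (f x)) * (Real.log (f ω) - Real.log (f x))
          + (f ω - f x) * ((f ω)⁻¹ - (f x)⁻¹))
      = (∑ ω, ∑ x, (μ ω * c ω x) * ((Real.log (f ω) - Real.log (f x)) * (Real.log (f ω) - Real.log (f x))))
        + (∑ ω, ∑ x, (μ ω * c ω x) * ((f ω - f x) * ((f ω)⁻¹ - (f x)⁻¹))) := by
    rw [← Finset.sum_add_distrib]
    refine Finset.sum_congr rfl fun ω _ => ?_
    rw [← Finset.sum_add_distrib]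
    exact Finset.sum_congr rfl fun x _ => by ring
  have h1 := hsym2 (fun ω => Real.log (f ω)) (fun ω => Real.log (f ω))
  have h2 := hsym2 f (fun ω => (f ω)⁻¹)
  linarith [hsum, heq, h1, h2]


end
end

section
/- Let C > 0. The 0-logSob inequality holds with constant C (i.e. Var(log f) ≤ −(C/2) 𝓔(f, 1/f) for every f : Ω → (0,∞)) if and only if the Poincaré inequality holds with constant C/2, i.e. Var(g) ≤ (C/2) 𝓔(g,g) for every g : Ω → ℝ. -/
open Real Finset

noncomputable section

variable {Ω : Type*}

/- ===== Auxiliary lemmas ===== -/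

section AuxAnalysis

private lemma two_log_le' {s : ℝ} (hs : 1 ≤ s) : 2 * Real.log s ≤ s - s⁻¹ := by
  set F : ℝ → ℝ := fun x => x - x⁻¹ - 2 * Real.log x with hF
  have hmono : MonotoneOn F (Set.Ici 1) := by
    apply monotoneOn_of_deriv_nonneg (convex_Ici 1)
    · intro x hx
      have hx0 : x ≠ 0 := by have : (1:ℝ) ≤ x := hx; positivity
      exact (((continuousAt_id.sub (continuousAt_inv₀ hx0)).sub
        (continuousAt_const.mul (Real.continuousAt_log hx0))).continuousWithinAt)
    · rw [interior_Ici]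
      intro x hx
      have hx0 : x ≠ 0 := by have : (1:ℝ) < x := hx; positivity
      exact (((differentiable_id.differentiableAt.sub
        ((differentiableAt_inv hx0))).sub
        ((differentiableAt_const 2).mul (Real.differentiableAt_log hx0))).differentiableWithinAt)
    · rw [interior_Ici]
      intro x hx
      have hx0 : x ≠ 0 := by have : (1:ℝ) < x := hx; positivity
      have hD : HasDerivAt F (1 - (-(x^2)⁻¹) - 2 * x⁻¹) x := by
        have h1 : HasDerivAt (fun y : ℝ => y - y⁻¹) (1 - (-(x^2)⁻¹)) x :=
          (hasDerivAt_id x).sub (hasDerivAt_inv hx0)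
        have h2 : HasDerivAt (fun y : ℝ => 2 * Real.log y) (2 * x⁻¹) x :=
          (Real.hasDerivAt_log hx0).const_mul 2
        exact h1.sub h2
      rw [hD.deriv]
      have h3 : 1 - (-(x^2)⁻¹) - 2 * x⁻¹ = (1 - x⁻¹)^2 := by
        field_simp; ring
      rw [h3]; positivity
  have h0 : F 1 = 0 := by simp [hF]
  have := hmono (Set.self_mem_Ici) hs hs
  rw [h0] at this
  simp only [hF] at this
  linarith

private lemma log_sq_le_aux' {a b : ℝ} (ha : 0 < a) (hb : 0 < b) (hba : b ≤ a) :
    (Real.log a - Real.log b)^2 ≤ (a - b) * (b⁻¹ - a⁻¹) := by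
  set t := a / b with ht
  have ht1 : 1 ≤ t := (one_le_div hb).mpr hba
  have ht0 : 0 < t := by linarith
  set s := Real.sqrt t with hs
  have hs1 : 1 ≤ s := Real.one_le_sqrt.mpr ht1
  have hs0 : 0 < s := by linarith
  have hst : s^2 = t := Real.sq_sqrt ht0.le
  have hlog : Real.log a - Real.log b = 2 * Real.log s := by
    rw [← Real.log_div ha.ne' hb.ne', ← ht, ← hst, Real.log_pow]
    push_cast; ring
  have hkey := two_log_le' hs1
  have hnn : 0 ≤ 2 * Real.log s := by
    have := Real.log_nonneg hs1; linarith
  have hsq : (2 * Real.log s)^2 ≤ (s - s⁻¹)^2 := pow_le_pow_left₀ hnn hkey 2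
  have hexp : (s - s⁻¹)^2 = t + t⁻¹ - 2 := by
    have h : (s - s⁻¹)^2 = s^2 - 2 + (s^2)⁻¹ := by
      field_simp; ring
    rw [h, hst]; ring
  have hfin : t + t⁻¹ - 2 = (a - b) * (b⁻¹ - a⁻¹) := by
    rw [ht]; field_simp; ring
  rw [hlog]
  calc (2 * Real.log s)^2 ≤ (s - s⁻¹)^2 := hsq
    _ = t + t⁻¹ - 2 := hexp
    _ = (a - b) * (b⁻¹ - a⁻¹) := hfin

private lemma log_sq_le' {a b : ℝ} (ha : 0 < a) (hb : 0 < b) :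
    (Real.log a - Real.log b)^2 ≤ (a - b) * (b⁻¹ - a⁻¹) := by
  rcases le_total b a with h | h
  · exact log_sq_le_aux' ha hb h
  · have := log_sq_le_aux' hb ha h
    calc (Real.log a - Real.log b)^2 = (Real.log b - Real.log a)^2 := by ring
      _ ≤ (b - a) * (a⁻¹ - b⁻¹) := this
      _ = (a - b) * (b⁻¹ - a⁻¹) := by ring

private lemma tendsto_expd' (d : ℝ) :
    Filter.Tendsto (fun ε : ℝ => (Real.exp (ε*d) + Real.exp (-(ε*d)) - 2)/ε^2)
      (nhdsWithin (0:ℝ) {(0:ℝ)}ᶜ) (nhds (d^2)) := by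
  set s : ℝ → ℝ := fun ε => Real.exp (ε*(d/2)) - Real.exp (-(ε*(d/2))) with hsdef
  have hs : HasDerivAt s d 0 := by
    have h1 : HasDerivAt (fun ε : ℝ => Real.exp (ε*(d/2))) (d/2) 0 := by
      have := (hasDerivAt_mul_const (d/2) (x := (0:ℝ))).exp
      simpa using this
    have h2 : HasDerivAt (fun ε : ℝ => Real.exp (-(ε*(d/2)))) (-(d/2)) 0 := by
      have hin : HasDerivAt (fun ε : ℝ => -(ε*(d/2))) (-(d/2)) 0 :=
        (hasDerivAt_mul_const (d/2) (x := (0:ℝ))).neg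
      have := hin.exp
      simpa using this
    exact (h1.sub h2).congr_deriv (by ring)
  have hslope := hasDerivAt_iff_tendsto_slope.mp hs
  have h2 : Filter.Tendsto (fun ε : ℝ => (slope s 0 ε)^2)
      (nhdsWithin (0:ℝ) {(0:ℝ)}ᶜ) (nhds (d^2)) := hslope.pow 2
  refine h2.congr fun ε => ?_
  have hsl : slope s 0 ε = s ε / ε := by
    rw [slope_def_field]; simp [hsdef]
  rw [hsl, div_pow]
  congr 1
  have e1 : Real.exp (ε*(d/2)) * Real.exp (ε*(d/2)) = Real.exp (ε*d) := by
    rw [← Real.exp_add]; congr 1; ring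
  have e2 : Real.exp (-(ε*(d/2))) * Real.exp (-(ε*(d/2))) = Real.exp (-(ε*d)) := by
    rw [← Real.exp_add]; congr 1; ring
  have e3 : Real.exp (ε*(d/2)) * Real.exp (-(ε*(d/2))) = 1 := by
    rw [← Real.exp_add]; simp
  simp only [hsdef]
  nlinarith [e1, e2, e3]

private lemma varE_smul' [Fintype Ω] (μ : Ω → ℝ) (g : Ω → ℝ) (ε : ℝ) :
    varE μ (fun ω => ε * g ω) = ε^2 * varE μ g := by
  simp only [varE, pexp]
  have h1 : ∑ ω, μ ω * (ε * g ω)^2 = ε^2 * ∑ ω, μ ω * g ω^2 := by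
    rw [Finset.mul_sum]; exact Finset.sum_congr rfl fun ω _ => by ring
  have h2 : ∑ ω, μ ω * (ε * g ω) = ε * ∑ ω, μ ω * g ω := by
    rw [Finset.mul_sum]; exact Finset.sum_congr rfl fun ω _ => by ring
  rw [h1, h2]; ring

private lemma exp_prod' (p q : ℝ) :
    (Real.exp p - Real.exp q) * ((Real.exp p)⁻¹ - (Real.exp q)⁻¹)
      = -(Real.exp (p - q) + Real.exp (-(p - q)) - 2) := by
  rw [Real.exp_neg, Real.exp_sub]
  have hp := (Real.exp_pos p).ne'
  have hq := (Real.exp_pos q).ne'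
  field_simp
  ring

end AuxAnalysis

section AuxMatrix
variable [Fintype Ω] [DecidableEq Ω]

/-- indicator basis function -/
private def eb (ω' : Ω) : Ω → ℝ := fun x => if x = ω' then 1 else 0

private lemma eb_sum : (∑ ω' : Ω, eb ω') = (fun _ : Ω => (1:ℝ)) := by
  funext x
  simp [eb, Finset.sum_apply]

private lemma apply_eq_sum (L : (Ω → ℝ) →ₗ[ℝ] (Ω → ℝ)) (g : Ω → ℝ) (ω : Ω) :
    L g ω = ∑ ω', g ω' * L (eb ω') ω := by
  have hg : g = ∑ ω', g ω' • eb ω' := by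
    funext x
    simp [eb, Finset.sum_apply, mul_ite]
  conv_lhs => rw [hg]
  rw [map_sum]
  simp [Finset.sum_apply]

private def Amat (μ : Ω → ℝ) (L : (Ω → ℝ) →ₗ[ℝ] (Ω → ℝ)) (ω ω' : Ω) : ℝ :=
  μ ω * L (eb ω') ω

variable (μ : Ω → ℝ) (L : (Ω → ℝ) →ₗ[ℝ] (Ω → ℝ))

private lemma Amat_rowsum (hL : IsGen μ L) (ω : Ω) : ∑ ω', Amat μ L ω ω' = 0 := by
  simp only [Amat, ← Finset.mul_sum]
  have h0 : ∑ ω', L (eb ω') ω = 0 := by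
    have h : (∑ ω' : Ω, L (eb ω')) = L (fun _ => 1) := by
      rw [← map_sum, eb_sum]
    have h2 := congrFun (h.trans hL.1) ω
    simpa [Finset.sum_apply] using h2
  rw [h0, mul_zero]

private lemma pexp_eb (h : Ω → ℝ) (ω : Ω) : pexp μ (fun x => eb ω x * h x) = μ ω * h ω := by
  simp only [pexp, eb]
  rw [Finset.sum_eq_single ω]
  · simp
  · intro b _ hb; simp [hb]
  · intro hh; exact absurd (Finset.mem_univ ω) hh

private lemma Amat_symm (hL : IsGen μ L) (ω ω' : Ω) : Amat μ L ω ω' = Amat μ L ω' ω := by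
  have h := hL.2.1 (eb ω) (eb ω')
  rw [pexp_eb, pexp_eb] at h
  simpa [Amat] using h

private lemma Amat_offdiag (hμpos : ∀ ω, 0 < μ ω) (hL : IsGen μ L) {ω ω' : Ω}
    (hne : ω ≠ ω') : Amat μ L ω ω' ≤ 0 := by
  have hmax := hL.2.2.2 (-(eb ω')) ω (by
    intro x
    simp only [Pi.neg_apply, eb, neg_le_neg_iff]
    rw [if_neg hne]
    split <;> norm_num)
  rw [map_neg] at hmax
  simp only [Pi.neg_apply] at hmax
  have : L (eb ω') ω ≤ 0 := by linarith
  exact mul_nonpos_of_nonneg_of_nonpos (hμpos ω).le this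

private lemma dform_eq_sum (f g : Ω → ℝ) :
    dform μ L f g = ∑ ω, ∑ ω', Amat μ L ω ω' * (f ω * g ω') := by
  simp only [dform, pexp]
  refine Finset.sum_congr rfl fun ω _ => ?_
  rw [apply_eq_sum L g ω, Finset.mul_sum, Finset.mul_sum]
  refine Finset.sum_congr rfl fun ω' _ => ?_
  simp only [Amat]; ring

private lemma sum_row (h : Ω → ℝ) (hL : IsGen μ L) :
    ∑ ω, ∑ ω', Amat μ L ω ω' * h ω = 0 := by
  refine Finset.sum_eq_zero fun ω _ => ?_
  rw [← Finset.sum_mul, Amat_rowsum μ L hL ω, zero_mul]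

private lemma sum_col (h : Ω → ℝ) (hL : IsGen μ L) :
    ∑ ω, ∑ ω', Amat μ L ω ω' * h ω' = 0 := by
  rw [Finset.sum_comm]
  refine Finset.sum_eq_zero fun ω' _ => ?_
  rw [← Finset.sum_mul]
  have h0 : ∑ ω, Amat μ L ω ω' = 0 := by
    rw [Finset.sum_congr rfl fun ω _ => Amat_symm μ L hL ω ω']
    exact Amat_rowsum μ L hL ω'
  rw [h0, zero_mul]

private lemma sum_cross (f g : Ω → ℝ) (hL : IsGen μ L) :
    ∑ ω, ∑ ω', Amat μ L ω ω' * (f ω' * g ω) = ∑ ω, ∑ ω', Amat μ L ω ω' * (f ω * g ω') := by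
  rw [Finset.sum_comm]
  exact Finset.sum_congr rfl fun a _ => Finset.sum_congr rfl fun b _ => by
    rw [Amat_symm μ L hL b a]

private lemma dform_decomp (hL : IsGen μ L) (f g : Ω → ℝ) :
    dform μ L f g
      = -(1/2) * ∑ ω, ∑ ω', Amat μ L ω ω' * ((f ω - f ω') * (g ω - g ω')) := by
  have hexpand : ∑ ω, ∑ ω', Amat μ L ω ω' * ((f ω - f ω') * (g ω - g ω'))
      = ∑ ω, ∑ ω', (Amat μ L ω ω' * (f ω * g ω) - Amat μ L ω ω' * (f ω * g ω')
          - Amat μ L ω ω' * (f ω' * g ω) + Amat μ L ω ω' * (f ω' * g ω')) := by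
    refine Finset.sum_congr rfl fun ω _ => Finset.sum_congr rfl fun ω' _ => by ring
  have hsplit : ∑ ω, ∑ ω', (Amat μ L ω ω' * (f ω * g ω) - Amat μ L ω ω' * (f ω * g ω')
          - Amat μ L ω ω' * (f ω' * g ω) + Amat μ L ω ω' * (f ω' * g ω'))
      = (∑ ω, ∑ ω', Amat μ L ω ω' * (f ω * g ω))
        - (∑ ω, ∑ ω', Amat μ L ω ω' * (f ω * g ω'))
        - (∑ ω, ∑ ω', Amat μ L ω ω' * (f ω' * g ω))
        + (∑ ω, ∑ ω', Amat μ L ω ω' * (f ω' * g ω')) := by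
    simp [Finset.sum_add_distrib, Finset.sum_sub_distrib]
  have h1 : ∑ ω, ∑ ω', Amat μ L ω ω' * (f ω * g ω) = 0 := sum_row μ L (fun ω => f ω * g ω) hL
  have h2 : ∑ ω, ∑ ω', Amat μ L ω ω' * (f ω' * g ω') = 0 := sum_col μ L (fun ω => f ω * g ω) hL
  have h3 := sum_cross μ L f g hL
  have h4 := dform_eq_sum μ L f g
  rw [hexpand, hsplit, h1, h2, h3, h4]
  ring

end AuxMatrix
/-- `0`-logSob with constant `C` iff Poincaré with constant `C/2`. -/
theorem zero_logSob_iff_poincare [Fintype Ω] (μ : Ω → ℝ)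
    (hμpos : ∀ ω, 0 < μ ω) (hμ1 : ∑ ω, μ ω = 1)
    (L : (Ω → ℝ) →ₗ[ℝ] (Ω → ℝ)) (hL : IsGen μ L)
    (C : ℝ) (hC : 0 < C) :
    LogSob μ L 0 C ↔ ∀ g : Ω → ℝ, varE μ g ≤ C / 2 * dform μ L g g := by
  classical
  have hiff : LogSob μ L 0 C ↔ (∀ f : Ω → ℝ, (∀ ω, 0 < f ω) →
      varE μ (fun ω => Real.log (f ω)) ≤ -(C / 2) * dform μ L f (fun ω => (f ω)⁻¹)) := by
    unfold LogSob
    rw [if_pos rfl]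
  rw [hiff]
  constructor
  · -- 0-logSob → Poincaré
    intro hLS g
    have hstep : ∀ ε : ℝ, ε^2 * varE μ g ≤
        C / 4 * ∑ ω, ∑ ω', -Amat μ L ω ω' *
          (Real.exp (ε * (g ω - g ω')) + Real.exp (-(ε * (g ω - g ω'))) - 2) := by
      intro ε
      have h := hLS (fun ω => Real.exp (ε * g ω)) (fun ω => Real.exp_pos _)
      have hv : varE μ (fun ω => Real.log (Real.exp (ε * g ω))) = ε^2 * varE μ g := by
        simp only [Real.log_exp]
        exact varE_smul' μ g ε
      rw [hv] at h
      have hd := dform_decomp μ L hL (fun ω => Real.exp (ε * g ω))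
        (fun ω => (Real.exp (ε * g ω))⁻¹)
      have hS : ∑ ω, ∑ ω', Amat μ L ω ω' *
          ((Real.exp (ε * g ω) - Real.exp (ε * g ω')) *
            ((Real.exp (ε * g ω))⁻¹ - (Real.exp (ε * g ω'))⁻¹))
          = ∑ ω, ∑ ω', -Amat μ L ω ω' *
            (Real.exp (ε * (g ω - g ω')) + Real.exp (-(ε * (g ω - g ω'))) - 2) := by
        refine Finset.sum_congr rfl fun ω _ => Finset.sum_congr rfl fun ω' _ => ?_
        have he := exp_prod' (ε * g ω) (ε * g ω')
        have harg : ε * g ω - ε * g ω' = ε * (g ω - g ω') := by ring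
        rw [harg] at he
        rw [he]; ring
      calc ε^2 * varE μ g ≤ -(C / 2) * dform μ L (fun ω => Real.exp (ε * g ω))
            (fun ω => (Real.exp (ε * g ω))⁻¹) := h
        _ = -(C / 2) * (-(1/2) * ∑ ω, ∑ ω', Amat μ L ω ω' *
            ((Real.exp (ε * g ω) - Real.exp (ε * g ω')) *
              ((Real.exp (ε * g ω))⁻¹ - (Real.exp (ε * g ω'))⁻¹))) := by rw [hd]
        _ = C / 4 * ∑ ω, ∑ ω', -Amat μ L ω ω' *
            (Real.exp (ε * (g ω - g ω')) + Real.exp (-(ε * (g ω - g ω'))) - 2) := by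
          rw [hS]; ring
    have hlim : Filter.Tendsto (fun ε : ℝ => C / 4 * ∑ ω, ∑ ω', -Amat μ L ω ω' *
          ((Real.exp (ε * (g ω - g ω')) + Real.exp (-(ε * (g ω - g ω'))) - 2) / ε^2))
        (nhdsWithin (0:ℝ) {(0:ℝ)}ᶜ)
        (nhds (C / 4 * ∑ ω, ∑ ω', -Amat μ L ω ω' * (g ω - g ω')^2)) := by
      apply Filter.Tendsto.const_mul
      apply tendsto_finset_sum
      intro ω _
      apply tendsto_finset_sum
      intro ω' _
      exact (tendsto_expd' (g ω - g ω')).const_mul _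
    have hbound : ∀ᶠ ε in nhdsWithin (0:ℝ) {(0:ℝ)}ᶜ, varE μ g ≤
        C / 4 * ∑ ω, ∑ ω', -Amat μ L ω ω' *
          ((Real.exp (ε * (g ω - g ω')) + Real.exp (-(ε * (g ω - g ω'))) - 2) / ε^2) := by
      filter_upwards [self_mem_nhdsWithin] with ε hε
      have hε0 : ε ≠ 0 := hε
      have hε2 : (0:ℝ) < ε^2 := by positivity
      have h := hstep ε
      have hdiv : varE μ g ≤ (C / 4 * ∑ ω, ∑ ω', -Amat μ L ω ω' *
          (Real.exp (ε * (g ω - g ω')) + Real.exp (-(ε * (g ω - g ω'))) - 2)) / ε^2 := by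
        rw [le_div_iff₀ hε2, mul_comm]
        exact h
      refine hdiv.trans (le_of_eq ?_)
      rw [mul_div_assoc, Finset.sum_div]
      congr 1
      refine Finset.sum_congr rfl fun ω _ => ?_
      rw [Finset.sum_div]
      exact Finset.sum_congr rfl fun ω' _ => mul_div_assoc _ _ _
    have hle : varE μ g ≤ C / 4 * ∑ ω, ∑ ω', -Amat μ L ω ω' * (g ω - g ω')^2 :=
      ge_of_tendsto hlim hbound
    refine hle.trans (le_of_eq ?_)
    rw [dform_decomp μ L hL g g]
    have hsq : ∑ ω, ∑ ω', -Amat μ L ω ω' * (g ω - g ω')^2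
        = -∑ ω, ∑ ω', Amat μ L ω ω' * ((g ω - g ω') * (g ω - g ω')) := by
      rw [← Finset.sum_neg_distrib]
      refine Finset.sum_congr rfl fun ω _ => ?_
      rw [← Finset.sum_neg_distrib]
      exact Finset.sum_congr rfl fun ω' _ => by ring
    rw [hsq]; ring
  · -- Poincaré → 0-logSob
    intro hP f hf
    have key := hP (fun ω => Real.log (f ω))
    refine key.trans ?_
    have hcomb : 0 ≤ ∑ ω, ∑ ω',
        (Amat μ L ω ω' * ((Real.log (f ω) - Real.log (f ω')) *
            (Real.log (f ω) - Real.log (f ω')))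
          + Amat μ L ω ω' * ((f ω - f ω') * ((f ω)⁻¹ - (f ω')⁻¹))) := by
      refine Finset.sum_nonneg fun ω _ => Finset.sum_nonneg fun ω' _ => ?_
      by_cases hcase : ω = ω'
      · subst hcase; simp
      · have hA : Amat μ L ω ω' ≤ 0 := Amat_offdiag μ L hμpos hL hcase
        have hkey := log_sq_le' (hf ω) (hf ω')
        have h2 : (Real.log (f ω) - Real.log (f ω')) * (Real.log (f ω) - Real.log (f ω'))
            + (f ω - f ω') * ((f ω)⁻¹ - (f ω')⁻¹) ≤ 0 := by nlinarith [hkey]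
        have h3 := mul_nonneg (neg_nonneg.2 hA) (neg_nonneg.2 h2)
        nlinarith [h3]
    have hadd : (∑ ω, ∑ ω', Amat μ L ω ω' * ((Real.log (f ω) - Real.log (f ω')) *
            (Real.log (f ω) - Real.log (f ω'))))
        + (∑ ω, ∑ ω', Amat μ L ω ω' * ((f ω - f ω') * ((f ω)⁻¹ - (f ω')⁻¹)))
        = ∑ ω, ∑ ω',
        (Amat μ L ω ω' * ((Real.log (f ω) - Real.log (f ω')) *
            (Real.log (f ω) - Real.log (f ω')))
          + Amat μ L ω ω' * ((f ω - f ω') * ((f ω)⁻¹ - (f ω')⁻¹))) := by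
      rw [← Finset.sum_add_distrib]
      exact Finset.sum_congr rfl fun ω _ => (Finset.sum_add_distrib).symm
    have hpos : 0 ≤ (∑ ω, ∑ ω', Amat μ L ω ω' * ((Real.log (f ω) - Real.log (f ω')) *
            (Real.log (f ω) - Real.log (f ω'))))
        + (∑ ω, ∑ ω', Amat μ L ω ω' * ((f ω - f ω') * ((f ω)⁻¹ - (f ω')⁻¹))) := by
      rw [hadd]; exact hcomb
    calc C / 2 * dform μ L (fun ω => Real.log (f ω)) (fun ω => Real.log (f ω))
        = C / 2 * (-(1/2) * ∑ ω, ∑ ω', Amat μ L ω ω' *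
            ((Real.log (f ω) - Real.log (f ω')) * (Real.log (f ω) - Real.log (f ω')))) := by
          rw [dform_decomp μ L hL]
      _ ≤ -(C / 2) * (-(1/2) * ∑ ω, ∑ ω', Amat μ L ω ω' *
            ((f ω - f ω') * ((f ω)⁻¹ - (f ω')⁻¹))) := by
          nlinarith [mul_nonneg hC.le hpos]
      _ = -(C / 2) * dform μ L f (fun ω => (f ω)⁻¹) := by
          rw [dform_decomp μ L hL]

end
end

section
/- Let p ∈ ℝ \ {1} and C > 0. If the p-logSob inequality holds with constant C, then the p'-logSob inequality also holds with the same constant C, where p' = p/(p−1) for p ≠ 0 and 0' = 0. -/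
open Real Finset

noncomputable section

variable {Ω : Type*}

/-- `p`-logSob implies `p'`-logSob with the same constant. -/
theorem logSob_conj [Fintype Ω] (μ : Ω → ℝ)
    (hμpos : ∀ ω, 0 < μ ω) (hμ1 : ∑ ω, μ ω = 1)
    (L : (Ω → ℝ) →ₗ[ℝ] (Ω → ℝ)) (hL : IsGen μ L)
    (p C : ℝ) (hp : p ≠ 1) (hC : 0 < C)
    (h : LogSob μ L p C) : LogSob μ L (hconj p) C := by
  obtain ⟨hL1, hsa, hpsd, hmax⟩ := hL
  by_cases hp0 : p = 0
  · simpa [hconj, hp0] using h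
  · have hp1 : p - 1 ≠ 0 := sub_ne_zero.mpr hp
    set q := p / (p - 1) with hq
    have hq0 : q ≠ 0 := div_ne_zero hp0 hp1
    have hq1 : q ≠ 1 := by
      intro hq1
      rw [hq, div_eq_one_iff_eq hp1] at hq1
      linarith
    have hq1' : q - 1 ≠ 0 := sub_ne_zero.mpr hq1
    have hqconj : hconj p = q := by simp [hconj, hp0, hq]
    rw [hqconj]
    unfold LogSob at h ⊢
    rw [if_neg hq0, if_neg hq1]
    rw [if_neg hp0, if_neg hp] at h
    intro g hg
    have hfpos : ∀ ω, 0 < g ω ^ (q - 1) := fun ω => Real.rpow_pos_of_pos (hg ω) _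
    have key := h (fun ω => g ω ^ (q - 1)) hfpos
    have e1 : ∀ ω, (g ω ^ (q - 1)) ^ p = g ω ^ q := by
      intro ω
      rw [← Real.rpow_mul (hg ω).le]
      congr 1
      rw [hq, div_sub_one hp1, eq_div_iff hp1, div_mul_eq_mul_div, div_mul_cancel₀ _ hp1]; ring
    have e2 : ∀ ω, (g ω ^ (q - 1)) ^ (p - 1) = g ω := by
      intro ω
      rw [← Real.rpow_mul (hg ω).le]
      have : (q - 1) * (p - 1) = 1 := by rw [hq, div_sub_one hp1, div_mul_cancel₀ _ hp1]; ring
      rw [this, Real.rpow_one]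
    simp only [e1, e2] at key
    have hconst : C * q ^ 2 / (4 * (q - 1)) = C * p ^ 2 / (4 * (p - 1)) := by
      rw [hq]
      field_simp
      ring
    have hsym : dform μ L (fun ω => g ω ^ (q - 1)) g =
        dform μ L (fun ω => g ω) (fun ω => g ω ^ (q - 1)) := by
      unfold dform
      exact hsa _ _
    rw [hconst, hsym]
    exact key

end
end

section
/- Let 1 < q ≤ p ≤ 2 and C > 0. If the q-logSob inequality holds with constant C, then the p-logSob inequality holds with constant ((p−1)q² / ((q−1)p²))·C. -/
open Real Finset

noncomputable section

variable {Ω : Type*}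

lemma texp_ineq (t a b c d : ℝ) (ht : 0 < t) (hac : a ≤ c) (hcd : c ≤ d) (hdb : d ≤ b)
    (hs : a + b = c + d) : t ^ c + t ^ d ≤ t ^ a + t ^ b := by
  rcases eq_or_lt_of_le (hac.trans (hcd.trans hdb)) with hab | hab
  · have h1 : a = c := le_antisymm hac (by linarith)
    have h2 : d = b := le_antisymm hdb (by linarith)
    rw [h1, h2]
  · set l := (b - c) / (b - a) with hl
    have hba : (0:ℝ) < b - a := by linarith
    have hl0 : 0 ≤ l := div_nonneg (by linarith) hba.le
    have hl1 : 0 ≤ 1 - l := by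
      rw [hl]
      rw [sub_nonneg, div_le_one hba]
      linarith
    have hc : c = l * a + (1 - l) * b := by
      rw [hl, div_mul_eq_mul_div, one_sub_div hba.ne', div_mul_eq_mul_div, ← add_div,
        eq_div_iff hba.ne']
      ring
    have hd2 : d = (1 - l) * a + l * b := by
      field_simp [hl]
      ring_nf
      nlinarith [hs]
    have conv := convexOn_exp
    have key : ∀ x y : ℝ, Real.exp (l * x + (1 - l) * y) ≤
        l * Real.exp x + (1 - l) * Real.exp y := by
      intro x y
      have := conv.2 (Set.mem_univ x) (Set.mem_univ y) hl0 hl1 (by ring)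
      simpa [smul_eq_mul] using this
    have h1 : t ^ c ≤ l * t ^ a + (1 - l) * t ^ b := by
      rw [Real.rpow_def_of_pos ht, Real.rpow_def_of_pos ht, Real.rpow_def_of_pos ht]
      have := key (Real.log t * a) (Real.log t * b)
      calc Real.exp (Real.log t * c)
          = Real.exp (l * (Real.log t * a) + (1 - l) * (Real.log t * b)) := by
            rw [hc]; ring_nf
        _ ≤ _ := this
    have h2 : t ^ d ≤ (1 - l) * t ^ a + l * t ^ b := by
      rw [Real.rpow_def_of_pos ht, Real.rpow_def_of_pos ht, Real.rpow_def_of_pos ht]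
      have := key (Real.log t * b) (Real.log t * a)
      calc Real.exp (Real.log t * d)
          = Real.exp (l * (Real.log t * b) + (1 - l) * (Real.log t * a)) := by
            rw [hd2]; ring_nf
        _ ≤ l * Real.exp (Real.log t * b) + (1 - l) * Real.exp (Real.log t * a) := this
        _ = (1 - l) * Real.exp (Real.log t * a) + l * Real.exp (Real.log t * b) := by ring
    linarith

lemma prod_ineq (u v a b c d : ℝ) (hu : 0 < u) (hv : 0 < v) (hac : a ≤ c) (hcd : c ≤ d)
    (hdb : d ≤ b) (hs : a + b = c + d) :
    (u ^ a - v ^ a) * (u ^ b - v ^ b) ≤ (u ^ c - v ^ c) * (u ^ d - v ^ d) := by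
  have ht : 0 < u / v := div_pos hu hv
  have h := texp_ineq (u / v) a b c d ht hac hcd hdb hs
  have hdiv : ∀ x : ℝ, (u / v) ^ x = u ^ x / v ^ x := fun x => Real.div_rpow hu.le hv.le x
  rw [hdiv, hdiv, hdiv, hdiv] at h
  have hvx : ∀ x : ℝ, (0:ℝ) < v ^ x := fun x => Real.rpow_pos_of_pos hv x
  have hvab : v ^ a * v ^ b = v ^ c * v ^ d := by
    rw [← Real.rpow_add hv, ← Real.rpow_add hv, hs]
  have huab : u ^ a * u ^ b = u ^ c * u ^ d := by
    rw [← Real.rpow_add hu, ← Real.rpow_add hu, hs]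
  have h2 : u ^ c * v ^ d + u ^ d * v ^ c ≤ u ^ a * v ^ b + u ^ b * v ^ a := by
    have hm := mul_le_mul_of_nonneg_right h (mul_pos (hvx a) (hvx b)).le
    have e1 : (u ^ c / v ^ c + u ^ d / v ^ d) * (v ^ a * v ^ b)
        = u ^ c * v ^ d + u ^ d * v ^ c := by
      rw [hvab]
      field_simp
    have e2 : (u ^ a / v ^ a + u ^ b / v ^ b) * (v ^ a * v ^ b)
        = u ^ a * v ^ b + u ^ b * v ^ a := by
      field_simp
    rw [e1, e2] at hm
    exact hm
  nlinarith [h2, huab, hvab]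

lemma dform_mono [Fintype Ω] (μ : Ω → ℝ) (hμpos : ∀ ω, 0 < μ ω)
    (L : (Ω → ℝ) →ₗ[ℝ] (Ω → ℝ)) (hL : IsGen μ L)
    (F G Φ Ψ : Ω → ℝ)
    (hpt : ∀ x y, (F x - F y) * (G x - G y) ≤ (Φ x - Φ y) * (Ψ x - Ψ y)) :
    dform μ L F G ≤ dform μ L Φ Ψ := by
  classical
  obtain ⟨h1, hsa, _, hmax⟩ := hL
  set δ : Ω → Ω → ℝ := fun y z => if z = y then 1 else 0 with hδ
  set B : Ω → Ω → ℝ := fun x y => μ x * L (δ y) x with hB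
  have hdecomp : ∀ g : Ω → ℝ, g = ∑ y, g y • δ y := by
    intro g; funext z
    simp [hδ, Finset.sum_apply]
  have hLg : ∀ (g : Ω → ℝ) (x : Ω), L g x = ∑ y, g y * L (δ y) x := by
    intro g x
    conv_lhs => rw [hdecomp g]
    rw [map_sum]
    simp only [map_smul, Finset.sum_apply, Pi.smul_apply, smul_eq_mul]
  have hrep : ∀ f g : Ω → ℝ, dform μ L f g = ∑ x, ∑ y, B x y * (f x * g y) := by
    intro f g
    unfold dform pexp
    refine Finset.sum_congr rfl fun x _ => ?_
    have hbeta : (fun ω => f ω * L g ω) x = f x * L g x := rfl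
    rw [hbeta, hLg g x, Finset.mul_sum, Finset.mul_sum]
    refine Finset.sum_congr rfl fun y _ => ?_
    simp only [hB]; ring
  have hBsymm : ∀ x y, B x y = B y x := by
    intro x y
    have hxy := hsa (δ x) (δ y)
    simp only [pexp, hδ] at hxy
    have e1 : ∀ (u w : Ω → ℝ) (z : Ω),
        (∑ ω, μ ω * ((if ω = z then (1:ℝ) else 0) * w ω)) = μ z * w z := by
      intro u w z
      rw [Finset.sum_eq_single z]
      · simp
      · intro b _ hb; simp [hb]
      · intro hz; exact absurd (Finset.mem_univ z) hz
    have h1' := e1 (δ x) (L fun z => if z = y then (1:ℝ) else 0) x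
    have h2' := e1 (δ y) (L fun z => if z = x then (1:ℝ) else 0) y
    simp only [hB, hδ]
    rw [← h1', ← h2']
    exact hxy
  have hBrow : ∀ x, ∑ y, B x y = 0 := by
    intro x
    have hone : (∑ y, δ y) = fun _ => (1:ℝ) := by
      funext z; simp [hδ, Finset.sum_apply]
    calc ∑ y, B x y = μ x * ∑ y, L (δ y) x := by
          rw [Finset.mul_sum]
      _ = μ x * L (∑ y, δ y) x := by rw [map_sum, Finset.sum_apply]
      _ = 0 := by rw [hone, h1]; simp
  have hBcol : ∀ y, ∑ x, B x y = 0 := by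
    intro y
    rw [Finset.sum_congr rfl fun x _ => hBsymm x y]
    exact hBrow y
  have hBnonpos : ∀ x y, x ≠ y → B x y ≤ 0 := by
    intro x y hxy
    have hneg : ∀ z, (-(δ y)) z ≤ (-(δ y)) x := by
      intro z
      simp only [Pi.neg_apply, hδ, if_neg hxy, neg_zero, neg_nonpos]
      split_ifs <;> norm_num
    have hm := hmax (-(δ y)) x hneg
    rw [map_neg] at hm
    simp only [Pi.neg_apply, le_neg, neg_zero] at hm
    exact mul_nonpos_of_nonneg_of_nonpos (hμpos x).le hm
  have hid : ∀ f g : Ω → ℝ,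
      ∑ x, ∑ y, (-(B x y)) * ((f x - f y) * (g x - g y)) = 2 * dform μ L f g := by
    intro f g
    rw [hrep]
    have hA : ∑ x, ∑ y, B x y * (f x * g x) = 0 := by
      refine Finset.sum_eq_zero fun x _ => ?_
      rw [← Finset.sum_mul, hBrow]; simp
    have hD : ∑ x, ∑ y, B x y * (f y * g y) = 0 := by
      rw [Finset.sum_comm]
      refine Finset.sum_eq_zero fun y _ => ?_
      rw [← Finset.sum_mul, hBcol]; simp
    have hCsw : ∑ x, ∑ y, B x y * (f y * g x) = ∑ x, ∑ y, B x y * (f x * g y) := by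
      rw [Finset.sum_comm]
      refine Finset.sum_congr rfl fun a _ => Finset.sum_congr rfl fun b _ => ?_
      rw [hBsymm]
    have expand : ∀ x y, (-(B x y)) * ((f x - f y) * (g x - g y)) =
        B x y * (f x * g y) + B x y * (f y * g x)
          - B x y * (f x * g x) - B x y * (f y * g y) := fun x y => by ring
    calc ∑ x, ∑ y, (-(B x y)) * ((f x - f y) * (g x - g y))
        = ∑ x, ∑ y, (B x y * (f x * g y) + B x y * (f y * g x)
            - B x y * (f x * g x) - B x y * (f y * g y)) := by
          refine Finset.sum_congr rfl fun x _ => Finset.sum_congr rfl fun y _ => expand x y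
      _ = (∑ x, ∑ y, B x y * (f x * g y)) + (∑ x, ∑ y, B x y * (f y * g x))
            - (∑ x, ∑ y, B x y * (f x * g x)) - (∑ x, ∑ y, B x y * (f y * g y)) := by
          simp [Finset.sum_add_distrib, Finset.sum_sub_distrib]
      _ = 2 * ∑ x, ∑ y, B x y * (f x * g y) := by
          rw [hA, hD, hCsw]; ring
  have hsum_le : ∑ x, ∑ y, (-(B x y)) * ((F x - F y) * (G x - G y))
      ≤ ∑ x, ∑ y, (-(B x y)) * ((Φ x - Φ y) * (Ψ x - Ψ y)) := by
    refine Finset.sum_le_sum fun x _ => Finset.sum_le_sum fun y _ => ?_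
    by_cases hxy : x = y
    · subst hxy; simp
    · exact mul_le_mul_of_nonneg_left (hpt x y) (by have := hBnonpos x y hxy; linarith)
  have hFG := hid F G
  have hΦΨ := hid Φ Ψ
  linarith

/-- `q`-logSob implies `p`-logSob for `1 < q ≤ p ≤ 2`. -/
theorem logSob_reversing [Fintype Ω] (μ : Ω → ℝ)
    (hμpos : ∀ ω, 0 < μ ω) (hμ1 : ∑ ω, μ ω = 1)
    (L : (Ω → ℝ) →ₗ[ℝ] (Ω → ℝ)) (hL : IsGen μ L)
    (p q C : ℝ) (hC : 0 < C) (h1q : 1 < q) (hqp : q ≤ p) (hp2 : p ≤ 2)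
    (h : LogSob μ L q C) :
    LogSob μ L p ((p - 1) * q ^ 2 / ((q - 1) * p ^ 2) * C) := by
  have hq0 : q ≠ 0 := by linarith
  have hq1 : q ≠ 1 := by linarith
  have hp1 : 1 < p := lt_of_lt_of_le h1q hqp
  have hp0 : p ≠ 0 := by linarith
  have hp1' : p ≠ 1 := by linarith
  have hqpos : 0 < q := by linarith
  have hppos : 0 < p := by linarith
  unfold LogSob at h ⊢
  rw [if_neg hq0, if_neg hq1] at h
  rw [if_neg hp0, if_neg hp1']
  intro f hf
  set g : Ω → ℝ := fun ω => f ω ^ (p / q) with hg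
  have hgpos : ∀ ω, 0 < g ω := fun ω => Real.rpow_pos_of_pos (hf ω) _
  have hqapp := h g hgpos
  have hgq : (fun ω => g ω ^ q) = fun ω => f ω ^ p := by
    funext ω
    rw [hg]
    rw [← Real.rpow_mul (hf ω).le, div_mul_cancel₀ _ hq0]
  rw [hgq] at hqapp
  have hd : dform μ L (fun ω => g ω ^ (q - 1)) g ≤ dform μ L (fun ω => f ω ^ (p - 1)) f := by
    have ha : (fun ω => g ω ^ (q - 1)) = fun ω => f ω ^ (p / q * (q - 1)) := by
      funext ω
      rw [hg, ← Real.rpow_mul (hf ω).le]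
    have hb : g = fun ω => f ω ^ (p / q) := hg
    rw [ha, hb]
    apply dform_mono μ hμpos L hL
    intro x y
    have hac : p / q * (q - 1) ≤ p - 1 := by
      rw [div_mul_eq_mul_div, div_le_iff₀ hqpos]
      nlinarith
    have hcd : p - 1 ≤ (1:ℝ) := by linarith
    have hdb : (1:ℝ) ≤ p / q := by
      rw [le_div_iff₀ hqpos]; linarith
    have hsum : p / q * (q - 1) + p / q = (p - 1) + 1 := by
      field_simp
      ring
    have key := prod_ineq (f x) (f y) (p / q * (q - 1)) (p / q) (p - 1) 1
      (hf x) (hf y) hac hcd hdb hsum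
    simpa [Real.rpow_one] using key
  have hK : (0:ℝ) ≤ C * q ^ 2 / (4 * (q - 1)) := by
    apply div_nonneg
    · positivity
    · linarith
  have hconst : (p - 1) * q ^ 2 / ((q - 1) * p ^ 2) * C * p ^ 2 / (4 * (p - 1))
      = C * q ^ 2 / (4 * (q - 1)) := by
    have h1 : q - 1 ≠ 0 := by linarith
    have h2 : p - 1 ≠ 0 := by linarith
    field_simp
  calc entE μ (fun ω => f ω ^ p)
      ≤ C * q ^ 2 / (4 * (q - 1)) * dform μ L (fun ω => g ω ^ (q - 1)) g := hqapp
    _ ≤ C * q ^ 2 / (4 * (q - 1)) * dform μ L (fun ω => f ω ^ (p - 1)) f :=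
        mul_le_mul_of_nonneg_left hd hK
    _ = (p - 1) * q ^ 2 / ((q - 1) * p ^ 2) * C * p ^ 2 / (4 * (p - 1))
          * dform μ L (fun ω => f ω ^ (p - 1)) f := by rw [hconst]

end
end

section
/- Let L = Id − E be the simple generator on (Ω, μ), i.e. (Lf)(ω) = f(ω) − E f. Then for every r ∈ [0,1], L satisfies the r-logSob inequality with constant 4. -/
open Real Finset

noncomputable section

variable {Ω : Type*}

lemma coshBound (x : ℝ) : 2 + x ^ 2 ≤ Real.exp x + Real.exp (-x) := by
  have core : ∀ y : ℝ, 0 ≤ y → 2 + y ^ 2 ≤ Real.exp y + Real.exp (-y) := by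
    intro y hy
    set t := y / 2 with ht
    have ht0 : 0 ≤ t := by positivity
    have ha : 1 + t + t ^ 2 / 2 ≤ Real.exp t := Real.quadratic_le_exp_of_nonneg ht0
    have hb0 : 0 < Real.exp (-t) := Real.exp_pos _
    have hab : Real.exp t * Real.exp (-t) = 1 := by rw [← Real.exp_add]; simp
    have hbu : Real.exp (-t) ≤ 1 - t + t ^ 2 / 2 := by nlinarith [mul_le_mul_of_nonneg_right ha hb0.le]
    have hdiff : y ≤ Real.exp t - Real.exp (-t) := by
      have : Real.exp t - Real.exp (-t) ≥ (1 + t + t^2/2) - (1 - t + t^2/2) := by linarith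
      calc y = 2 * t := by rw [ht]; ring
        _ ≤ _ := by linarith
    have he1 : Real.exp y = Real.exp t * Real.exp t := by rw [← Real.exp_add]; congr 1; ring
    have he2 : Real.exp (-y) = Real.exp (-t) * Real.exp (-t) := by rw [← Real.exp_add]; congr 1; ring
    rw [he1, he2]
    nlinarith [sq_nonneg (Real.exp t - Real.exp (-t)), hdiff, hy]
  rcases le_total 0 x with hx | hx
  · exact core x hx
  · have := core (-x) (by linarith)
    rw [add_comm (Real.exp x)]
    simpa [neg_neg] using this

lemma padeBound (a : ℝ) (ha : 0 ≤ a) : (2 - a) * Real.exp a ≤ 2 + a := by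
  have hd : ∀ x : ℝ, HasDerivAt (fun x : ℝ => 2 + x - (2 - x) * Real.exp x)
      (1 - (1 - x) * Real.exp x) x := by
    intro x
    have h1 : HasDerivAt (fun x : ℝ => (2 - x) * Real.exp x)
        ((0 - 1) * Real.exp x + (2 - id x) * Real.exp x) x :=
      ((hasDerivAt_const x (2:ℝ)).sub (hasDerivAt_id x)).mul (Real.hasDerivAt_exp x)
    have h2 : HasDerivAt (fun x : ℝ => 2 + x) (0 + 1) x :=
      (hasDerivAt_const x (2:ℝ)).add (hasDerivAt_id x)
    have := h2.sub h1
    refine this.congr_deriv ?_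
    simp
    ring
  have mono : Monotone (fun x : ℝ => 2 + x - (2 - x) * Real.exp x) := by
    apply monotone_of_deriv_nonneg
    · exact fun x => (hd x).differentiableAt
    · intro x
      rw [(hd x).deriv]
      have h1 : 1 - x ≤ Real.exp (-x) := by linarith [Real.add_one_le_exp (-x)]
      have h2 : (1 - x) * Real.exp x ≤ Real.exp (-x) * Real.exp x :=
        mul_le_mul_of_nonneg_right h1 (Real.exp_pos x).le
      rw [← Real.exp_add] at h2
      simp at h2
      linarith
  have h0 := mono ha
  simp only [Real.exp_zero] at h0
  norm_num at h0
  linarith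

lemma keyH (a b : ℝ) (ha : 0 ≤ a) (hb : 0 ≤ b) :
    b * (a + b) * (Real.exp a - 1) ≤ a * ((1 - Real.exp (-b)) * (Real.exp (a + b) - 1)) := by
  have hA := Real.add_one_le_exp a
  have hB : 1 + b + b ^ 2 / 2 ≤ Real.exp b := Real.quadratic_le_exp_of_nonneg hb
  have hC : 2 + b ^ 2 ≤ Real.exp b + Real.exp (-b) := coshBound b
  have hP : (2 - a) * Real.exp a ≤ 2 + a := padeBound a ha
  have hab : Real.exp (a + b) = Real.exp a * Real.exp b := Real.exp_add a b
  have hbb : Real.exp b * Real.exp (-b) = 1 := by rw [← Real.exp_add]; simp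
  rw [hab]
  have h1 : 0 ≤ a * (Real.exp a - 1) * (Real.exp b - 1 - b - b ^ 2 / 2) :=
    mul_nonneg (mul_nonneg ha (by linarith)) (by linarith)
  have h2 : 0 ≤ a * (Real.exp b + Real.exp (-b) - 2 - b ^ 2) := mul_nonneg ha (by linarith)
  have h3 : 0 ≤ b ^ 2 * ((2 + a) - (2 - a) * Real.exp a) := mul_nonneg (sq_nonneg b) (by linarith)
  nlinarith [h1, h2, h3, hbb]

lemma pwAux (r a b : ℝ) (hr0 : 0 < r) (hr1 : r < 1) (hA : 0 < a) (hB : 0 < b) (hba : b ≤ a) :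
    (1 - r) * ((a ^ r - b ^ r) * (Real.log a - Real.log b)) +
      r * ((a ^ (r - 1) - b ^ (r - 1)) * (a - b)) ≤ 0 := by
  obtain ⟨u, x, hx0, ha, hb⟩ : ∃ u x, 0 ≤ x ∧ a = Real.exp (u + x) ∧ b = Real.exp u := by
    refine ⟨Real.log b, Real.log a - Real.log b, ?_, ?_, (Real.exp_log hB).symm⟩
    · have := Real.log_le_log hB hba
      linarith
    · rw [show Real.log b + (Real.log a - Real.log b) = Real.log a by ring, Real.exp_log hA]
  subst ha hb
  rw [Real.log_exp, Real.log_exp, ← Real.exp_mul, ← Real.exp_mul, ← Real.exp_mul, ← Real.exp_mul]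
  have inner : (1 - r) * ((Real.exp (r * x) - 1) * x) +
      r * ((Real.exp ((r - 1) * x) - 1) * (Real.exp x - 1)) ≤ 0 := by
    rcases eq_or_lt_of_le hx0 with h | h
    · simp [← h]
    · have hkey := keyH (r * x) ((1 - r) * x) (mul_nonneg hr0.le hx0) (mul_nonneg (by linarith) hx0)
      rw [show r * x + (1 - r) * x = x by ring, show -((1 - r) * x) = (r - 1) * x by ring] at hkey
      nlinarith [hkey, h]
  have h1 : Real.exp ((u + x) * r) = Real.exp (u * r) * Real.exp (r * x) := by
    rw [← Real.exp_add]; congr 1; ring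
  have h2 : Real.exp ((u + x) * (r - 1)) = Real.exp (u * (r - 1)) * Real.exp ((r - 1) * x) := by
    rw [← Real.exp_add]; congr 1; ring
  have h3 : Real.exp (u + x) = Real.exp u * Real.exp x := Real.exp_add u x
  have h5 : Real.exp (u * (r - 1)) * Real.exp u = Real.exp (u * r) := by
    rw [← Real.exp_add]; congr 1; ring
  have factor : (1 - r) * ((Real.exp ((u + x) * r) - Real.exp (u * r)) * (u + x - u)) +
      r * ((Real.exp ((u + x) * (r - 1)) - Real.exp (u * (r - 1))) *
        (Real.exp (u + x) - Real.exp u)) =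
      Real.exp (u * r) * ((1 - r) * ((Real.exp (r * x) - 1) * x) +
        r * ((Real.exp ((r - 1) * x) - 1) * (Real.exp x - 1))) := by
    rw [h1, h2, h3]
    linear_combination (r * ((Real.exp ((r - 1) * x) - 1) * (Real.exp x - 1))) * h5
  rw [factor]
  exact mul_nonpos_of_nonneg_of_nonpos (Real.exp_pos _).le inner

lemma pwMain (r a b : ℝ) (hr0 : 0 < r) (hr1 : r < 1) (hA : 0 < a) (hB : 0 < b) :
    (1 - r) * ((a ^ r - b ^ r) * (Real.log a - Real.log b)) +
      r * ((a ^ (r - 1) - b ^ (r - 1)) * (a - b)) ≤ 0 := by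
  rcases le_total b a with h | h
  · exact pwAux r a b hr0 hr1 hA hB h
  · have h2 := pwAux r b a hr0 hr1 hB hA h
    nlinarith [h2]

lemma dform_simple [Fintype Ω] (μ : Ω → ℝ) (u v : Ω → ℝ) :
    dform μ (simpleL μ) u v =
      pexp μ (fun ω => u ω * v ω) - pexp μ u * pexp μ v := by
  simp only [dform, simpleL, LinearMap.coe_mk, AddHom.coe_mk, pexp, mul_sub,
    Finset.sum_sub_distrib]
  congr 1
  rw [Finset.sum_mul]
  exact Finset.sum_congr rfl fun ω _ => by ring

lemma nonempty_of_sum_one [Fintype Ω] (μ : Ω → ℝ) (hμ1 : ∑ ω, μ ω = 1) : Nonempty Ω := by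
  by_contra h
  rw [not_nonempty_iff] at h
  have : (∑ ω, μ ω) = 0 := by rw [Finset.univ_eq_empty, Finset.sum_empty]
  rw [hμ1] at this
  norm_num at this

lemma pexp_pos [Fintype Ω] (μ : Ω → ℝ) (hμpos : ∀ ω, 0 < μ ω) (hμ1 : ∑ ω, μ ω = 1)
    (g : Ω → ℝ) (hg : ∀ ω, 0 < g ω) : 0 < pexp μ g := by
  have := nonempty_of_sum_one μ hμ1
  exact Finset.sum_pos (fun ω _ => mul_pos (hμpos ω) (hg ω)) Finset.univ_nonempty

lemma jensen_log [Fintype Ω] (μ : Ω → ℝ) (hμpos : ∀ ω, 0 < μ ω) (hμ1 : ∑ ω, μ ω = 1)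
    (g : Ω → ℝ) (hg : ∀ ω, 0 < g ω) :
    pexp μ (fun ω => Real.log (g ω)) ≤ Real.log (pexp μ g) := by
  have hEg : 0 < pexp μ g := pexp_pos μ hμpos hμ1 g hg
  have hpt : ∀ ω, Real.log (g ω) ≤ Real.log (pexp μ g) + (g ω / pexp μ g - 1) := by
    intro ω
    have h := Real.log_le_sub_one_of_pos (div_pos (hg ω) hEg)
    rw [Real.log_div (ne_of_gt (hg ω)) (ne_of_gt hEg)] at h
    linarith
  have hsum : pexp μ (fun ω => Real.log (g ω)) ≤
      ∑ ω, μ ω * (Real.log (pexp μ g) + (g ω / pexp μ g - 1)) :=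
    Finset.sum_le_sum fun ω _ => mul_le_mul_of_nonneg_left (hpt ω) (hμpos ω).le
  have hcalc : ∑ ω, μ ω * (Real.log (pexp μ g) + (g ω / pexp μ g - 1)) =
      Real.log (pexp μ g) := by
    have h1 : ∑ ω, μ ω * (Real.log (pexp μ g) + (g ω / pexp μ g - 1)) =
        (∑ ω, μ ω) * Real.log (pexp μ g) + (∑ ω, μ ω * g ω) / pexp μ g - (∑ ω, μ ω) := by
      rw [Finset.sum_mul, Finset.sum_div, ← Finset.sum_add_distrib, ← Finset.sum_sub_distrib]
      refine Finset.sum_congr rfl fun ω _ => by ring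
    rw [h1, hμ1]
    have : (∑ ω, μ ω * g ω) = pexp μ g := rfl
    rw [this, div_self (ne_of_gt hEg)]
    ring
  linarith [hsum, hcalc ▸ hsum]

lemma ent_le_cov [Fintype Ω] (μ : Ω → ℝ) (hμpos : ∀ ω, 0 < μ ω) (hμ1 : ∑ ω, μ ω = 1)
    (g : Ω → ℝ) (hg : ∀ ω, 0 < g ω) :
    entE μ g ≤ pexp μ (fun ω => g ω * Real.log (g ω)) -
      pexp μ g * pexp μ (fun ω => Real.log (g ω)) := by
  have hEg : 0 < pexp μ g := pexp_pos μ hμpos hμ1 g hg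
  have hj := jensen_log μ hμpos hμ1 g hg
  have := mul_le_mul_of_nonneg_left hj hEg.le
  simp only [entE]
  linarith

lemma cov_expand [Fintype Ω] (μ : Ω → ℝ) (hμ1 : ∑ ω, μ ω = 1) (u v : Ω → ℝ) :
    2 * (pexp μ (fun ω => u ω * v ω) - pexp μ u * pexp μ v) =
      ∑ ω, ∑ ω', μ ω * μ ω' * ((u ω - u ω') * (v ω - v ω')) := by
  simp only [pexp]
  have h1 : ∑ ω, ∑ ω', (μ ω * (u ω * v ω)) * μ ω' = ∑ ω, μ ω * (u ω * v ω) := by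
    refine Finset.sum_congr rfl fun ω _ => ?_
    rw [← Finset.mul_sum, hμ1, mul_one]
  have h2 : ∑ ω, ∑ ω', μ ω * (μ ω' * (u ω' * v ω')) = ∑ ω', μ ω' * (u ω' * v ω') := by
    rw [Finset.sum_comm]
    refine Finset.sum_congr rfl fun ω' _ => ?_
    rw [← Finset.sum_mul, hμ1, one_mul]
  have h3 : ∑ ω, ∑ ω', (μ ω * u ω) * (μ ω' * v ω') =
      (∑ ω, μ ω * u ω) * (∑ ω, μ ω * v ω) := (Finset.sum_mul_sum _ _ _ _).symm
  have h4 : ∑ ω, ∑ ω', (μ ω * v ω) * (μ ω' * u ω') =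
      (∑ ω, μ ω * v ω) * (∑ ω, μ ω * u ω) := (Finset.sum_mul_sum _ _ _ _).symm
  have hsplit : ∑ ω, ∑ ω', μ ω * μ ω' * ((u ω - u ω') * (v ω - v ω')) =
      (∑ ω, ∑ ω', (μ ω * (u ω * v ω)) * μ ω') + (∑ ω, ∑ ω', μ ω * (μ ω' * (u ω' * v ω')))
        - (∑ ω, ∑ ω', (μ ω * u ω) * (μ ω' * v ω'))
        - (∑ ω, ∑ ω', (μ ω * v ω) * (μ ω' * u ω')) := by
    simp only [← Finset.sum_add_distrib, ← Finset.sum_sub_distrib]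
    exact Finset.sum_congr rfl fun ω _ => Finset.sum_congr rfl fun ω' _ => by ring
  rw [hsplit, h1, h2, h3, h4]
  ring

lemma cov_comb_nonpos [Fintype Ω] (μ : Ω → ℝ) (hμpos : ∀ ω, 0 < μ ω) (hμ1 : ∑ ω, μ ω = 1)
    (c d : ℝ) (u v s t : Ω → ℝ)
    (hpt : ∀ ω ω', c * ((u ω - u ω') * (v ω - v ω')) +
      d * ((s ω - s ω') * (t ω - t ω')) ≤ 0) :
    c * (pexp μ (fun ω => u ω * v ω) - pexp μ u * pexp μ v) +
      d * (pexp μ (fun ω => s ω * t ω) - pexp μ s * pexp μ t) ≤ 0 := by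
  have h1 := cov_expand μ hμ1 u v
  have h2 := cov_expand μ hμ1 s t
  have hsum : ∑ ω, ∑ ω', (c * (μ ω * μ ω' * ((u ω - u ω') * (v ω - v ω'))) +
      d * (μ ω * μ ω' * ((s ω - s ω') * (t ω - t ω')))) ≤ 0 := by
    refine Finset.sum_nonpos fun ω _ => Finset.sum_nonpos fun ω' _ => ?_
    have hμμ : 0 ≤ μ ω * μ ω' := mul_nonneg (hμpos ω).le (hμpos ω').le
    have := hpt ω ω'
    nlinarith [this, hμμ]
  have hre : ∑ ω, ∑ ω', (c * (μ ω * μ ω' * ((u ω - u ω') * (v ω - v ω'))) +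
      d * (μ ω * μ ω' * ((s ω - s ω') * (t ω - t ω')))) =
      c * (∑ ω, ∑ ω', μ ω * μ ω' * ((u ω - u ω') * (v ω - v ω'))) +
      d * (∑ ω, ∑ ω', μ ω * μ ω' * ((s ω - s ω') * (t ω - t ω'))) := by
    simp only [Finset.sum_add_distrib, Finset.mul_sum]
  rw [hre, ← h1, ← h2] at hsum
  linarith


section Toolkit
variable [Fintype Ω] {μ : Ω → ℝ}

lemma pexp_add' (u v : Ω → ℝ) : pexp μ (fun ω => u ω + v ω) = pexp μ u + pexp μ v := by
  simp only [pexp, mul_add, Finset.sum_add_distrib]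

lemma pexp_sub' (u v : Ω → ℝ) : pexp μ (fun ω => u ω - v ω) = pexp μ u - pexp μ v := by
  simp only [pexp, mul_sub, Finset.sum_sub_distrib]

lemma pexp_const' (hμ1 : ∑ ω, μ ω = 1) (c : ℝ) : pexp μ (fun _ => c) = c := by
  unfold pexp
  rw [← Finset.sum_mul, hμ1, one_mul]

lemma pexp_smul' (c : ℝ) (u : Ω → ℝ) : pexp μ (fun ω => c * u ω) = c * pexp μ u := by
  unfold pexp
  rw [Finset.mul_sum]
  exact Finset.sum_congr rfl fun ω _ => by ring

lemma pexp_mono' (hμpos : ∀ ω, 0 < μ ω) {u v : Ω → ℝ} (h : ∀ ω, u ω ≤ v ω) :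
    pexp μ u ≤ pexp μ v :=
  Finset.sum_le_sum fun ω _ => mul_le_mul_of_nonneg_left (h ω) (hμpos ω).le

lemma pexp_nonneg' (hμpos : ∀ ω, 0 < μ ω) {u : Ω → ℝ} (h : ∀ ω, 0 ≤ u ω) :
    0 ≤ pexp μ u :=
  Finset.sum_nonneg fun ω _ => mul_nonneg (hμpos ω).le (h ω)

end Toolkit

/-- the simple generator satisfies the `r`-logSob inequality with
constant `4` for every `r ∈ [0,1]`. -/
theorem simple_r_logSob [Fintype Ω] (μ : Ω → ℝ)
    (hμpos : ∀ ω, 0 < μ ω) (hμ1 : ∑ ω, μ ω = 1) :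
    ∀ r : ℝ, 0 ≤ r → r ≤ 1 → LogSob μ (simpleL μ) r 4 := by
  intro r hr0 hr1
  unfold LogSob
  split_ifs with h0 h1
  · -- case r = 0
    intro f hf
    rw [dform_simple]
    set g : Ω → ℝ := fun ω => Real.log (f ω) with hgdef
    set m := pexp μ g with hm
    have hgm : pexp μ (fun ω => g ω - m) = 0 := by
      rw [pexp_sub' g (fun _ => m), pexp_const' hμ1, ← hm, sub_self]
    have ha1 : 1 ≤ pexp μ (fun ω => Real.exp (g ω - m)) := by
      have h1 : pexp μ (fun ω => 1 + (g ω - m)) = 1 := by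
        rw [pexp_add' (fun _ => (1:ℝ)) (fun ω => g ω - m), pexp_const' hμ1, hgm, add_zero]
      rw [← h1]
      exact pexp_mono' hμpos fun ω => by linarith [Real.add_one_le_exp (g ω - m)]
    have hb1 : 1 ≤ pexp μ (fun ω => Real.exp (-(g ω - m))) := by
      have h1 : pexp μ (fun ω => 1 + -(g ω - m)) = 1 := by
        rw [pexp_add' (fun _ => (1:ℝ)) (fun ω => -(g ω - m)), pexp_const' hμ1]
        have : pexp μ (fun ω => -(g ω - m)) = -1 * pexp μ (fun ω => g ω - m) := by
          rw [← pexp_smul' (-1) (fun ω => g ω - m)]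
          congr 1
          funext ω
          ring
        rw [this, hgm]
        ring
      rw [← h1]
      exact pexp_mono' hμpos fun ω => by linarith [Real.add_one_le_exp (-(g ω - m))]
    have hcosh : 2 + pexp μ (fun ω => (g ω - m) ^ 2) ≤
        pexp μ (fun ω => Real.exp (g ω - m)) + pexp μ (fun ω => Real.exp (-(g ω - m))) := by
      have h1 : pexp μ (fun ω => 2 + (g ω - m) ^ 2) =
          2 + pexp μ (fun ω => (g ω - m) ^ 2) := by
        rw [pexp_add' (fun _ => (2:ℝ)) (fun ω => (g ω - m) ^ 2), pexp_const' hμ1]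
      have h2 : pexp μ (fun ω => Real.exp (g ω - m) + Real.exp (-(g ω - m))) =
          pexp μ (fun ω => Real.exp (g ω - m)) + pexp μ (fun ω => Real.exp (-(g ω - m))) :=
        pexp_add' _ _
      rw [← h1, ← h2]
      exact pexp_mono' hμpos fun ω => coshBound (g ω - m)
    have hvar : varE μ g = pexp μ (fun ω => (g ω - m) ^ 2) := by
      have e : pexp μ (fun ω => (g ω - m) ^ 2) =
          pexp μ (fun ω => g ω ^ 2) + (-2 * m * pexp μ g + m ^ 2) := by
        calc pexp μ (fun ω => (g ω - m) ^ 2)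
            = pexp μ (fun ω => g ω ^ 2 + (-2 * m * g ω + m ^ 2)) := by
              congr 1; funext ω; ring
          _ = pexp μ (fun ω => g ω ^ 2) + (-2 * m * pexp μ g + m ^ 2) := by
              rw [pexp_add' (fun ω => g ω ^ 2) (fun ω => -2 * m * g ω + m ^ 2),
                pexp_add' (fun ω => -2 * m * g ω) (fun _ => m ^ 2),
                pexp_smul' (-2 * m) g, pexp_const' hμ1]
      rw [varE, e, ← hm]
      ring
    have hEf : pexp μ f = Real.exp m * pexp μ (fun ω => Real.exp (g ω - m)) := by
      rw [← pexp_smul']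
      congr 1
      funext ω
      rw [← Real.exp_add, show m + (g ω - m) = g ω by ring, hgdef]
      exact (Real.exp_log (hf ω)).symm
    have hEfi : pexp μ (fun ω => (f ω)⁻¹) =
        Real.exp (-m) * pexp μ (fun ω => Real.exp (-(g ω - m))) := by
      rw [← pexp_smul']
      congr 1
      funext ω
      rw [← Real.exp_add, show -m + -(g ω - m) = -(g ω) by ring,
        show g ω = Real.log (f ω) from rfl, ← Real.log_inv,
        Real.exp_log (inv_pos.mpr (hf ω))]
    have hE1 : pexp μ (fun ω => f ω * (f ω)⁻¹) = 1 := by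
      rw [show (fun ω => f ω * (f ω)⁻¹) = fun _ : Ω => (1:ℝ) from
        funext fun ω => mul_inv_cancel₀ (ne_of_gt (hf ω)), pexp_const' hμ1]
    have hS0 : 0 ≤ pexp μ (fun ω => (g ω - m) ^ 2) :=
      pexp_nonneg' hμpos fun ω => sq_nonneg _
    rw [hE1, hEf, hEfi, hvar]
    have hmm : Real.exp m * Real.exp (-m) = 1 := by rw [← Real.exp_add]; simp
    set a := pexp μ (fun ω => Real.exp (g ω - m))
    set b := pexp μ (fun ω => Real.exp (-(g ω - m)))
    have hab : 0 ≤ (a - 1) * (b - 1) := mul_nonneg (by linarith) (by linarith)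
    have : Real.exp m * a * (Real.exp (-m) * b) = a * b := by
      rw [show Real.exp m * a * (Real.exp (-m) * b) =
        Real.exp m * Real.exp (-m) * (a * b) by ring, hmm, one_mul]
    rw [this]
    nlinarith [ha1, hb1, hcosh, hS0, hab]
  · -- case r = 1
    intro f hf
    rw [dform_simple]
    have h := ent_le_cov μ hμpos hμ1 f hf
    have h44 : (4:ℝ) / 4 = 1 := by norm_num
    rw [h44, one_mul]
    exact h
  · -- case 0 < r < 1
    have hr0' : 0 < r := lt_of_le_of_ne hr0 (Ne.symm h0)
    have hr1' : r < 1 := lt_of_le_of_ne hr1 h1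
    intro f hf
    rw [dform_simple]
    have hg : ∀ ω, 0 < f ω ^ r := fun ω => Real.rpow_pos_of_pos (hf ω) r
    have hEnt := ent_le_cov μ hμpos hμ1 (fun ω => f ω ^ r) hg
    have hlog1 : pexp μ (fun ω => f ω ^ r * Real.log (f ω ^ r)) =
        r * pexp μ (fun ω => f ω ^ r * Real.log (f ω)) := by
      rw [← pexp_smul']
      congr 1
      funext ω
      rw [Real.log_rpow (hf ω)]
      ring
    have hlog2 : pexp μ (fun ω => Real.log (f ω ^ r)) =
        r * pexp μ (fun ω => Real.log (f ω)) := by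
      rw [← pexp_smul']
      congr 1
      funext ω
      rw [Real.log_rpow (hf ω)]
    rw [hlog1, hlog2] at hEnt
    have A1 : entE μ (fun ω => f ω ^ r) ≤
        r * (pexp μ (fun ω => f ω ^ r * Real.log (f ω)) -
          pexp μ (fun ω => f ω ^ r) * pexp μ (fun ω => Real.log (f ω))) := by
      nlinarith [hEnt]
    have A2 := cov_comb_nonpos μ hμpos hμ1 (1 - r) r (fun ω => f ω ^ r)
      (fun ω => Real.log (f ω)) (fun ω => f ω ^ (r - 1)) f
      (fun ω ω' => pwMain r (f ω) (f ω') hr0' hr1' (hf ω) (hf ω'))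
    have hco : 4 * r ^ 2 / (4 * (r - 1)) = r ^ 2 / (r - 1) := by
      rw [mul_div_mul_left _ _ (by norm_num : (4:ℝ) ≠ 0)]
    rw [hco]
    have hmul := mul_le_mul_of_nonneg_left A2 hr0'.le
    have hfinal : r * (pexp μ (fun ω => f ω ^ r * Real.log (f ω)) -
          pexp μ (fun ω => f ω ^ r) * pexp μ (fun ω => Real.log (f ω))) ≤
        r ^ 2 / (r - 1) * (pexp μ (fun ω => f ω ^ (r - 1) * f ω) -
          pexp μ (fun ω => f ω ^ (r - 1)) * pexp μ f) := by
      rw [div_mul_eq_mul_div, le_div_iff_of_neg (by linarith : r - 1 < 0)]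
      nlinarith [hmul]
    linarith [A1, hfinal]

end
end
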